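/- For every g⁺ ∈ B_b(X̄₊), every ℓ⁺, ℓ⁻ ≥ 0, and every (s,i) ∈ ℝ₊ × E, 𝔼_{s,i}[g⁺(τ_{ℓ⁺}⁺(s), X_{τ_{ℓ⁺}⁺(s)})] = (Ξ⁺_{ℓ⁻,ℓ⁺} g⁺)(s,i) + (Ξ⁻_{ℓ⁻,ℓ⁺} (J⁺ 𝒫⁺_{ℓ⁺+ℓ⁻} g⁺))(s,i). -/

import Mathlib

open MeasureTheory Set Filter
open scoped ENNReal

noncomputable section

/-- The extended state space `Ē = E ∪ {∂}`, with `none` playing the role of the coffin state. -/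
instance optionMeasurableSpace {E : Type*} : MeasurableSpace (Option E) := ⊤

/-- The canonical path space: `Ē`-valued functions of time. -/
abbrev CPath (E : Type*) := ℝ → Option E

/-- The state of the path at an extended time, with `X_∞ := ∂`. -/
def Xat {E : Type*} (t : ℝ≥0∞) (ω : CPath E) : Option E :=
  if t = ∞ then none else ω t.toReal

/-- The additive functional `φ_t(s) = ∫_s^t v(X_u) du`. -/
def phi {E : Type*} (v : Option E → ℝ) (s t : ℝ) (ω : CPath E) : ℝ :=
  ∫ u in s..t, v (ω u)

/-- The first passage time `τ_ℓ⁺(s) = inf {t ∈ [s,∞] : φ_t(s) > ℓ}` (with `inf ∅ = ∞`). -/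
def tauP {E : Type*} (v : Option E → ℝ) (s ℓ : ℝ) (ω : CPath E) : ℝ≥0∞ :=
  sInf {t : ℝ≥0∞ | ∃ u : ℝ, s ≤ u ∧ t = ENNReal.ofReal u ∧ ℓ < phi v s u ω}

/-- The first passage time `τ_ℓ⁻(s) = inf {t ∈ [s,∞] : φ_t(s) < -ℓ}` (with `inf ∅ = ∞`). -/
def tauM {E : Type*} (v : Option E → ℝ) (s ℓ : ℝ) (ω : CPath E) : ℝ≥0∞ :=
  sInf {t : ℝ≥0∞ | ∃ u : ℝ, s ≤ u ∧ t = ENNReal.ofReal u ∧ phi v s u ω < -ℓ}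

/-- `ξ⁺_{ℓ⁻,ℓ⁺}(s)`: equals `τ_{ℓ⁺}⁺(s)` if it is strictly smaller than `τ_{ℓ⁻}⁻(s)`, else `∞`. -/
def xiP {E : Type*} (v : Option E → ℝ) (ℓm ℓp s : ℝ) (ω : CPath E) : ℝ≥0∞ :=
  if tauP v s ℓp ω < tauM v s ℓm ω then tauP v s ℓp ω else ∞

/-- `ξ⁻_{ℓ⁻,ℓ⁺}(s)`: equals `τ_{ℓ⁻}⁻(s)` if it is strictly smaller than `τ_{ℓ⁺}⁺(s)`, else `∞`. -/
def xiM {E : Type*} (v : Option E → ℝ) (ℓm ℓp s : ℝ) (ω : CPath E) : ℝ≥0∞ :=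
  if tauM v s ℓm ω < tauP v s ℓp ω then tauM v s ℓm ω else ∞

/-- Membership in `B_b(X̄₊)`: bounded measurable functions on
`X̄₊ = (ℝ₊ × E₊) ∪ {(∞,∂)}` vanishing at `(∞,∂)`, encoded as functions on
`[0,∞] × Ē` vanishing off `ℝ₊ × E₊` (in particular at `(∞,∂)`). -/
def MemBbP {E : Type*} (v : Option E → ℝ) (g : ℝ≥0∞ → Option E → ℝ) : Prop :=
  (∀ j, Measurable fun t => g t j) ∧ (∃ C, ∀ t j, |g t j| ≤ C) ∧
    (∀ t, g t none = 0) ∧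
    (∀ (t : ℝ≥0∞) (e : E), ¬(0 < v (some e) ∧ t ≠ ∞) → g t (some e) = 0)

/-- Membership in `B_b(X̄₋)`. -/
def MemBbM {E : Type*} (v : Option E → ℝ) (g : ℝ≥0∞ → Option E → ℝ) : Prop :=
  (∀ j, Measurable fun t => g t j) ∧ (∃ C, ∀ t j, |g t j| ≤ C) ∧
    (∀ t, g t none = 0) ∧
    (∀ (t : ℝ≥0∞) (e : E), ¬(v (some e) < 0 ∧ t ≠ ∞) → g t (some e) = 0)

/-- `g` decays exponentially fast to zero: `|g(s,i)| ≤ C e^{-c s}` for some `C, c > 0`. -/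
def DecaysExp {E : Type*} (g : ℝ≥0∞ → Option E → ℝ) : Prop :=
  ∃ C c : ℝ, 0 < C ∧ 0 < c ∧
    ∀ (t : ℝ≥0∞) (j : Option E), t ≠ ∞ → |g t j| ≤ C * Real.exp (-c * t.toReal)

/-- Generic expectation operator `(s,i) ↦ 𝔼_{s,i}[g(σ(s), X_{σ(s)})]` associated with a family of
random times `σ(s)`, as an operator on functions of `(t,j) ∈ [0,∞] × Ē` (value `0` at `t = ∞`). -/
def applyAt {E : Type*} (P : ℝ → Option E → Measure (CPath E)) (σ : ℝ → CPath E → ℝ≥0∞)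
    (g : ℝ≥0∞ → Option E → ℝ) : ℝ≥0∞ → Option E → ℝ :=
  fun t j =>
    if t = ∞ then 0
    else ∫ ω, g (σ t.toReal ω) (Xat (σ t.toReal ω) ω) ∂ P t.toReal j

/-- Restriction of a function on `[0,∞] × Ē` to `X̄₊` (zero off `ℝ₊ × E₊`). -/
def restrP {E : Type*} (v : Option E → ℝ) (g : ℝ≥0∞ → Option E → ℝ) :
    ℝ≥0∞ → Option E → ℝ :=
  fun t j =>
    match j with
    | none => 0
    | some e => if 0 < v (some e) ∧ t ≠ ∞ then g t (some e) else 0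

/-- Restriction of a function on `[0,∞] × Ē` to `X̄₋` (zero off `ℝ₊ × E₋`). -/
def restrM {E : Type*} (v : Option E → ℝ) (g : ℝ≥0∞ → Option E → ℝ) :
    ℝ≥0∞ → Option E → ℝ :=
  fun t j =>
    match j with
    | none => 0
    | some e => if v (some e) < 0 ∧ t ≠ ∞ then g t (some e) else 0

/-- The operator `𝒫_ℓ⁺ : B_b(X̄₊) → B_b(X̄₊)`, `(𝒫_ℓ⁺ g)(s,i) = 𝔼_{s,i}[g(τ_ℓ⁺(s), X_{τ_ℓ⁺(s)})]`. -/
def opP {E : Type*} (P : ℝ → Option E → Measure (CPath E)) (v : Option E → ℝ) (ℓ : ℝ)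
    (g : ℝ≥0∞ → Option E → ℝ) : ℝ≥0∞ → Option E → ℝ :=
  restrP v (applyAt P (fun s => tauP v s ℓ) g)

/-- The operator `J⁺ : B_b(X̄₊) → B_b(X̄₋)`, `(J⁺ g)(s,i) = 𝔼_{s,i}[g(τ₀⁺(s), X_{τ₀⁺(s)})]`. -/
def opJP {E : Type*} (P : ℝ → Option E → Measure (CPath E)) (v : Option E → ℝ)
    (g : ℝ≥0∞ → Option E → ℝ) : ℝ≥0∞ → Option E → ℝ :=
  restrM v (applyAt P (fun s => tauP v s 0) g)

/-- The operator `𝒫_ℓ⁻ : B_b(X̄₋) → B_b(X̄₋)`. -/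
def opM {E : Type*} (P : ℝ → Option E → Measure (CPath E)) (v : Option E → ℝ) (ℓ : ℝ)
    (g : ℝ≥0∞ → Option E → ℝ) : ℝ≥0∞ → Option E → ℝ :=
  restrM v (applyAt P (fun s => tauM v s ℓ) g)

/-- The operator `J⁻ : B_b(X̄₋) → B_b(X̄₊)`. -/
def opJM {E : Type*} (P : ℝ → Option E → Measure (CPath E)) (v : Option E → ℝ)
    (g : ℝ≥0∞ → Option E → ℝ) : ℝ≥0∞ → Option E → ℝ :=
  restrP v (applyAt P (fun s => tauM v s 0) g)

/-- The operator `Ξ⁺_{ℓ⁻,ℓ⁺}`, `(Ξ⁺ g)(s,i) = 𝔼_{s,i}[g(ξ⁺_{ℓ⁻,ℓ⁺}(s), X_{ξ⁺_{ℓ⁻,ℓ⁺}(s)})]`. -/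
def opXiP {E : Type*} (P : ℝ → Option E → Measure (CPath E)) (v : Option E → ℝ) (ℓm ℓp : ℝ)
    (g : ℝ≥0∞ → Option E → ℝ) (s : ℝ) (j : Option E) : ℝ :=
  ∫ ω, g (xiP v ℓm ℓp s ω) (Xat (xiP v ℓm ℓp s ω) ω) ∂ P s j

/-- The operator `Ξ⁻_{ℓ⁻,ℓ⁺}`. -/
def opXiM {E : Type*} (P : ℝ → Option E → Measure (CPath E)) (v : Option E → ℝ) (ℓm ℓp : ℝ)
    (g : ℝ≥0∞ → Option E → ℝ) (s : ℝ) (j : Option E) : ℝ :=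
  ∫ ω, g (xiM v ℓm ℓp s ω) (Xat (xiM v ℓm ℓp s ω) ω) ∂ P s j

/-- The raw σ-field `σ(X_u, u ∈ [s,r])` on path space. -/
def natF {E : Type*} (s r : ℝ) : MeasurableSpace (CPath E) :=
  ⨆ u ∈ Set.Icc s r, MeasurableSpace.comap (fun ω : CPath E => ω u) ⊤

/-- The right-continuous filtration `F^s_t = ⋂_{r > t} σ(X_u, u ∈ [s,r])`,
indexed by extended times, with `F^s_∞ = σ(X_u, u ≥ s)`. -/
def Fst {E : Type*} (s : ℝ) (t : ℝ≥0∞) : MeasurableSpace (CPath E) :=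
  if t = ∞ then ⨆ u ∈ Set.Ici s, MeasurableSpace.comap (fun ω : CPath E => ω u) ⊤
  else ⨅ r ∈ Set.Ioi t.toReal, natF s r

/-- `τ` is an `𝔽ₛ`-stopping time. -/
def IsST {E : Type*} (s : ℝ) (τ : CPath E → ℝ≥0∞) : Prop :=
  ∀ t : ℝ≥0∞, MeasurableSet[Fst s t] {ω | τ ω ≤ t}

/-- The σ-field `F^s_τ` at an `𝔽ₛ`-stopping time `τ`. -/
def stoppedSigma {E : Type*} (s : ℝ) (τ : CPath E → ℝ≥0∞) (hτ : IsST s τ) :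
    MeasurableSpace (CPath E) where
  MeasurableSet' A := ∀ t : ℝ≥0∞, MeasurableSet[Fst s t] (A ∩ {ω | τ ω ≤ t})
  measurableSet_empty := fun t => by
    simpa using (MeasurableSet.empty : MeasurableSet[Fst s t] (∅ : Set (CPath E)))
  measurableSet_compl := fun A hA t => by
    have h1 : Aᶜ ∩ {ω | τ ω ≤ t} = {ω | τ ω ≤ t} \ (A ∩ {ω | τ ω ≤ t}) := by
      ext ω
      simp only [Set.mem_inter_iff, Set.mem_compl_iff, Set.mem_diff, Set.mem_setOf_eq]
      tauto
    rw [h1]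
    exact MeasurableSet.diff (hτ t) (hA t)
  measurableSet_iUnion := fun f hf t => by
    rw [Set.iUnion_inter]
    exact MeasurableSet.iUnion fun n => hf n t

/-- A canonical time-inhomogeneous Markov family on `Ē`, with right-continuous sample paths,
absorbing coffin state, initial condition `ℙ_{s,i}(X_s = i) = 1` and the strong Markov property
with respect to the right-continuous filtrations `𝔽ₛ`. -/
structure MarkovFamily (E : Type*) (v : Option E → ℝ) where
  /-- The family of probability measures `ℙ_{s,i}` on canonical path space. -/
  P : ℝ → Option E → Measure (CPath E)
  prob : ∀ s j, IsProbabilityMeasure (P s j)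
  init : ∀ (s : ℝ) (j : Option E), 0 ≤ s → P s j {ω | ω s = j} = 1
  pathReg : ∀ (s : ℝ) (j : Option E), 0 ≤ s → ∀ᵐ ω ∂ P s j,
    (∀ t, s ≤ t → ∃ ε > 0, ∀ u ∈ Set.Ico t (t + ε), ω u = ω t) ∧
    (∀ t, s ≤ t → ω t = none → ∀ u, t ≤ u → ω u = none)
  strongMarkov : ∀ (s : ℝ) (j : Option E), 0 ≤ s →
    ∀ (τ : CPath E → ℝ≥0∞) (hτ : IsST s τ), (∀ ω, ENNReal.ofReal s ≤ τ ω) →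
    ∀ G : ℝ≥0∞ → CPath E → ℝ, Measurable (Function.uncurry G) →
      (∃ C, ∀ t ω, |G t ω| ≤ C) →
      (∀ (t : ℝ) (ω ω' : CPath E), (∀ u, t ≤ u → ω u = ω' u) →
        G (ENNReal.ofReal t) ω = G (ENNReal.ofReal t) ω') →
      (P s j)[fun ω => Set.indicator {ω' : CPath E | τ ω' ≠ ∞}
          (fun ω' => G (τ ω') ω') ω | stoppedSigma s τ hτ]
        =ᵐ[P s j]
      fun ω => Set.indicator {ω' : CPath E | τ ω' ≠ ∞}
          (fun ω' => ∫ ω'', G (τ ω') ω'' ∂ P (τ ω').toReal (ω' (τ ω').toReal)) ω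

/-- The first jump time `γ(s) = inf {t ≥ s : X_t ≠ X_s}`. -/
def gammaJump {E : Type*} (s : ℝ) (ω : CPath E) : ℝ≥0∞ :=
  sInf {t : ℝ≥0∞ | ∃ u : ℝ, s ≤ u ∧ t = ENNReal.ofReal u ∧ ω u ≠ ω s}

/-- Assumption on the sub-Markovian generator matrices `(Λ_s)`: entries uniformly bounded by `K`,
nonnegative off-diagonal entries, nonpositive row sums, and the law of the first jump time is
`ℙ_{s,i}(γ(s) ≤ T) = 1 - exp(∫_s^T Λ_u(i,i) du)`. -/
structure GenAssumption (E : Type*) [Fintype E] (v : Option E → ℝ)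
    (M : MarkovFamily E v) (K : ℝ) where
  hK : 0 < K
  Lam : ℝ → E → E → ℝ
  bdd : ∀ s i j, |Lam s i j| ≤ K
  offDiag : ∀ s i j, i ≠ j → 0 ≤ Lam s i j
  rowSum : ∀ s i, ∑ j, Lam s i j ≤ 0
  jumpLaw : ∀ (s T : ℝ) (i : E), 0 ≤ s → s ≤ T →
    (M.P s (some i) {ω | gammaJump s ω ≤ ENNReal.ofReal T}).toReal
      = 1 - Real.exp (∫ u in s..T, Lam u i i)

end


noncomputable section Aux

open MeasurableSpace

namespace SM15

open scoped Classical

set_option linter.unusedSectionVars false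

variable {E : Type*} [Fintype E]

/-- Witness predicate: `j` is an eventual value of `ω` along rationals to the right of `t`. -/
def Wit (ω : CPath E) (t : ℝ) (j : Option E) : Prop :=
  ∃ q : ℚ, t < (q : ℝ) ∧ ∀ q' : ℚ, t < (q' : ℝ) → (q' : ℝ) ≤ (q : ℝ) → ω q' = j

theorem Wit.unique {ω : CPath E} {t : ℝ} {j j' : Option E} (h : Wit ω t j) (h' : Wit ω t j') :
    j = j' := by
  obtain ⟨q, hq, hval⟩ := h
  obtain ⟨q', hq', hval'⟩ := h'
  obtain ⟨q'', h1, h2⟩ := exists_rat_btwn (lt_min hq hq')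
  rw [← hval q'' h1 (h2.le.trans (min_le_left _ _)),
    hval' q'' h1 (h2.le.trans (min_le_right _ _))]

/-- `reg ω t` : the eventual value of `ω` along rationals to the right of `t` (default `∂`). -/
def reg (ω : CPath E) (t : ℝ) : Option E :=
  if h : ∃ j : Option E, Wit ω t j then h.choose else none

theorem reg_eq_of_wit {ω : CPath E} {t : ℝ} {j : Option E} (h : Wit ω t j) : reg ω t = j := by
  rw [reg, dif_pos ⟨j, h⟩]
  exact Wit.unique (Exists.choose_spec (⟨j, h⟩ : ∃ j, Wit ω t j)) h

theorem reg_eq_none {ω : CPath E} {t : ℝ} (h : ¬ ∃ j, Wit ω t j) : reg ω t = none := by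
  rw [reg, dif_neg h]

theorem wit_congr {ω ω' : CPath E} {t b : ℝ} (htb : t < b)
    (h : ∀ q : ℚ, t < (q : ℝ) → (q : ℝ) < b → ω q = ω' q) {j : Option E}
    (hw : Wit ω t j) : Wit ω' t j := by
  obtain ⟨q, hq, hval⟩ := hw
  obtain ⟨q₁, h1, h2⟩ := exists_rat_btwn (lt_min hq htb)
  refine ⟨q₁, h1, fun q' hq' hle => ?_⟩
  rw [← h q' hq' (lt_of_le_of_lt hle (lt_of_lt_of_le h2 (min_le_right _ _)))]
  exact hval q' hq' (hle.trans ((lt_of_lt_of_le h2 (min_le_left _ _)).le))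

theorem reg_congr {ω ω' : CPath E} {t b : ℝ} (htb : t < b)
    (h : ∀ q : ℚ, t < (q : ℝ) → (q : ℝ) < b → ω q = ω' q) : reg ω t = reg ω' t := by
  by_cases hex : ∃ j, Wit ω t j
  · obtain ⟨j, hj⟩ := hex
    rw [reg_eq_of_wit hj, reg_eq_of_wit (wit_congr htb h hj)]
  · rw [reg_eq_none hex, reg_eq_none]
    rintro ⟨j, hj⟩
    exact hex ⟨j, wit_congr htb (fun q hq hqb => (h q hq hqb).symm) hj⟩

/-- Right local constancy of a path from time `a` on. -/
def RLC (a : ℝ) (ω : CPath E) : Prop :=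
  ∀ t, a ≤ t → ∃ ε > 0, ∀ u ∈ Set.Ico t (t + ε), ω u = ω t

theorem RLC.reg_eq {a : ℝ} {ω : CPath E} (h : RLC a ω) {t : ℝ} (ht : a ≤ t) : reg ω t = ω t := by
  obtain ⟨ε, hε, hconst⟩ := h t ht
  obtain ⟨q, h1, h2⟩ := exists_rat_btwn (lt_add_of_pos_right t hε)
  exact reg_eq_of_wit ⟨q, h1, fun q' hq' hle => hconst q' ⟨hq'.le, lt_of_le_of_lt hle h2⟩⟩

theorem measurableSet_wit (j : Option E) :
    MeasurableSet {p : ℝ × CPath E | Wit p.2 p.1 j} := by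
  have hrw : {p : ℝ × CPath E | Wit p.2 p.1 j}
      = ⋃ q : ℚ, ({p : ℝ × CPath E | p.1 < (q : ℝ)} ∩
          ⋂ q' : ℚ, {p : ℝ × CPath E | p.1 < (q' : ℝ) → (q' : ℝ) ≤ (q : ℝ) → p.2 q' = j}) := by
    ext p
    simp only [Set.mem_setOf_eq, Set.mem_iUnion, Set.mem_inter_iff, Set.mem_iInter, Wit]
  rw [hrw]
  refine MeasurableSet.iUnion fun q => MeasurableSet.inter
    (measurableSet_lt measurable_fst measurable_const) (MeasurableSet.iInter fun q' => ?_)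
  by_cases hle : (q' : ℝ) ≤ (q : ℝ)
  · have : {p : ℝ × CPath E | p.1 < (q' : ℝ) → (q' : ℝ) ≤ (q : ℝ) → p.2 q' = j}
        = {p : ℝ × CPath E | (q' : ℝ) ≤ p.1} ∪ {p : ℝ × CPath E | p.2 q' = j} := by
      ext p
      constructor
      · intro hp
        by_cases hq : p.1 < (q' : ℝ)
        · exact Or.inr (hp hq hle)
        · exact Or.inl (not_lt.mp hq)
      · rintro (hp | hp) h1 _
        · exact absurd h1 (not_lt.mpr hp)
        · exact hp
    rw [this]
    refine MeasurableSet.union (measurableSet_le measurable_const measurable_fst) ?_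
    have hj : MeasurableSet ({j} : Set (Option E)) := measurableSet_top
    have hmeas : Measurable fun p : ℝ × CPath E => p.2 ((q' : ℚ) : ℝ) :=
      (measurable_pi_apply _).comp measurable_snd
    have := hmeas hj
    simpa [Set.preimage] using this
  · have : {p : ℝ × CPath E | p.1 < (q' : ℝ) → (q' : ℝ) ≤ (q : ℝ) → p.2 q' = j} = Set.univ := by
      ext p; simp [hle]
    rw [this]; exact MeasurableSet.univ

theorem measurable_reg : Measurable fun p : ℝ × CPath E => reg p.2 p.1 := by
  intro S _
  have hrw : (fun p : ℝ × CPath E => reg p.2 p.1) ⁻¹' S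
      = ⋃ j ∈ S, {p : ℝ × CPath E | reg p.2 p.1 = j} := by
    ext p; simp [Set.mem_preimage]
  rw [hrw]
  refine MeasurableSet.biUnion (Set.to_countable S) fun j _ => ?_
  by_cases hj : j = none
  · subst hj
    have : {p : ℝ × CPath E | reg p.2 p.1 = none}
        = {p : ℝ × CPath E | Wit p.2 p.1 none} ∪ ⋂ j' : Option E, {p | Wit p.2 p.1 j'}ᶜ := by
      ext p
      constructor
      · intro hp
        by_cases hex : ∃ j', Wit p.2 p.1 j'
        · obtain ⟨j', hj'⟩ := hex
          left
          have : j' = none := by rw [← reg_eq_of_wit hj']; exact hp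
          rwa [this] at hj'
        · right; simpa using fun j' hw => hex ⟨j', hw⟩
      · rintro (hp | hp)
        · exact reg_eq_of_wit hp
        · refine reg_eq_none ?_
          rintro ⟨j', hj'⟩
          exact (Set.mem_iInter.mp hp j') hj'
    rw [this]
    exact (measurableSet_wit none).union
      (MeasurableSet.iInter fun j' => (measurableSet_wit j').compl)
  · have : {p : ℝ × CPath E | reg p.2 p.1 = j} = {p : ℝ × CPath E | Wit p.2 p.1 j} := by
      ext p
      constructor
      · intro hp
        by_cases hex : ∃ j', Wit p.2 p.1 j'
        · obtain ⟨j', hj'⟩ := hex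
          have : j' = j := by rw [← reg_eq_of_wit hj']; exact hp
          rwa [this] at hj'
        · exact absurd (hp.symm.trans (reg_eq_none hex)) hj
      · exact fun hp => reg_eq_of_wit hp
    rw [this]; exact measurableSet_wit j

variable (v : Option E → ℝ)

/-- The additive functional computed along the regularized path. -/
def phiT (a b : ℝ) (ω : CPath E) : ℝ := ∫ u in a..b, v (reg ω u)

theorem measurable_vreg : Measurable fun p : ℝ × CPath E => v (reg p.2 p.1) :=
  measurable_from_top.comp measurable_reg

theorem measurable_vreg_section (ω : CPath E) : Measurable fun u : ℝ => v (reg ω u) :=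
  (measurable_vreg v).comp (measurable_id.prodMk measurable_const)

theorem exists_vBound : ∃ C : ℝ, 0 ≤ C ∧ ∀ j : Option E, |v j| ≤ C := by
  obtain ⟨C, hC⟩ := Finite.exists_le fun j : Option E => |v j|
  exact ⟨max C 0, le_max_right _ _, fun j => (hC j).trans (le_max_left _ _)⟩

theorem phiT_intervalIntegrable (a b : ℝ) (ω : CPath E) :
    IntervalIntegrable (fun u => v (reg ω u)) MeasureTheory.volume a b := by
  obtain ⟨C, _, hC⟩ := exists_vBound v
  rw [intervalIntegrable_iff]
  refine MeasureTheory.Measure.integrableOn_of_bounded (M := C) ?_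
    ((measurable_vreg_section v ω).aestronglyMeasurable) ?_
  · rw [Set.uIoc, Real.volume_Ioc]; exact ENNReal.ofReal_ne_top
  · exact MeasureTheory.ae_of_all _ fun u => by rw [Real.norm_eq_abs]; exact hC _

theorem phiT_same (a : ℝ) (ω : CPath E) : phiT v a a ω = 0 :=
  intervalIntegral.integral_same

theorem phiT_add (a b c : ℝ) (ω : CPath E) :
    phiT v a b ω + phiT v b c ω = phiT v a c ω :=
  intervalIntegral.integral_add_adjacent_intervals
    (phiT_intervalIntegrable v a b ω) (phiT_intervalIntegrable v b c ω)

theorem phiT_cont (a : ℝ) (ω : CPath E) : Continuous fun b => phiT v a b ω :=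
  intervalIntegral.continuous_primitive (fun _ _ => phiT_intervalIntegrable v _ _ ω) a

theorem measurable_phiT (a b : ℝ) : Measurable fun ω : CPath E => phiT v a b ω := by
  have h1 : ∀ c d : ℝ, Measurable fun ω : CPath E => ∫ u in Set.Ioc c d, v (reg ω u) := by
    intro c d
    have hsm : MeasureTheory.StronglyMeasurable fun p : CPath E × ℝ => v (reg p.1 p.2) :=
      ((measurable_vreg v).comp measurable_swap).stronglyMeasurable
    exact (hsm.integral_prod_right' (ν := MeasureTheory.volume.restrict (Set.Ioc c d))).measurable
  have h2 : (fun ω : CPath E => phiT v a b ω) = fun ω =>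
      (∫ u in Set.Ioc a b, v (reg ω u)) - ∫ u in Set.Ioc b a, v (reg ω u) := by
    funext ω; rfl
  rw [h2]; exact (h1 a b).sub (h1 b a)

theorem measurable_phiT0 : Measurable fun p : ℝ × CPath E => phiT v 0 p.1 p.2 := by
  exact measurable_uncurry_of_continuous_of_measurable
    (u := fun (b : ℝ) (ω : CPath E) => phiT v 0 b ω)
    (fun ω => phiT_cont v 0 ω) (fun b => measurable_phiT v 0 b)

theorem measurable_phiT_start (b : ℝ) :
    Measurable fun p : ℝ × CPath E => phiT v p.1 b p.2 := by
  have h : ∀ p : ℝ × CPath E, phiT v p.1 b p.2 = phiT v 0 b p.2 - phiT v 0 p.1 p.2 := by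
    intro p
    have := phiT_add v 0 p.1 b p.2
    linarith
  simp only [h]
  exact ((measurable_phiT v 0 b).comp measurable_snd).sub (measurable_phiT0 v)

/-- Generic rational first-passage functional. -/
def hitT (a : ℝ) (A : Set ℝ) (φ : ℝ → ℝ) : ℝ≥0∞ :=
  ⨅ q : ℚ, if a ≤ (q : ℝ) ∧ φ q ∈ A then ENNReal.ofReal q else ∞

theorem hitT_le {a : ℝ} {A : Set ℝ} {φ : ℝ → ℝ} {q : ℚ} (haq : a ≤ (q : ℝ)) (hq : φ q ∈ A) :
    hitT a A φ ≤ ENNReal.ofReal q :=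
  iInf_le_of_le q (le_of_eq (if_pos ⟨haq, hq⟩))

theorem le_hitT {a : ℝ} {A : Set ℝ} {φ : ℝ → ℝ} : ENNReal.ofReal a ≤ hitT a A φ :=
  le_iInf fun q => by
    split_ifs with h
    · exact ENNReal.ofReal_le_ofReal h.1
    · exact le_top

theorem hitT_lt_iff {a : ℝ} {A : Set ℝ} {φ : ℝ → ℝ} {x : ℝ≥0∞} :
    hitT a A φ < x ↔ ∃ q : ℚ, a ≤ (q : ℝ) ∧ φ q ∈ A ∧ ENNReal.ofReal q < x := by
  rw [hitT, iInf_lt_iff]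
  constructor
  · rintro ⟨q, hq⟩
    by_cases h : a ≤ (q : ℝ) ∧ φ q ∈ A
    · rw [if_pos h] at hq; exact ⟨q, h.1, h.2, hq⟩
    · rw [if_neg h] at hq; exact absurd hq (by simp)
  · rintro ⟨q, h1, h2, h3⟩
    exact ⟨q, by rw [if_pos ⟨h1, h2⟩]; exact h3⟩

theorem hitT_toReal_ge {a : ℝ} {A : Set ℝ} {φ : ℝ → ℝ} (h0a : 0 ≤ a)
    (hfin : hitT a A φ ≠ ∞) : a ≤ (hitT a A φ).toReal := by
  have h2 := ENNReal.toReal_mono hfin (le_hitT (a := a) (A := A) (φ := φ))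
  rwa [ENNReal.toReal_ofReal h0a] at h2

theorem hitT_approx {a : ℝ} {A : Set ℝ} {φ : ℝ → ℝ} (h0a : 0 ≤ a)
    (hfin : hitT a A φ ≠ ∞) {δ : ℝ} (hδ : 0 < δ) :
    ∃ q : ℚ, (hitT a A φ).toReal ≤ (q : ℝ) ∧ (q : ℝ) < (hitT a A φ).toReal + δ ∧
      a ≤ (q : ℝ) ∧ φ q ∈ A := by
  have hne : ENNReal.ofReal δ ≠ 0 := by simp [ENNReal.ofReal_eq_zero, not_le, hδ]
  have hlt : hitT a A φ < hitT a A φ + ENNReal.ofReal δ := ENNReal.lt_add_right hfin hne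
  obtain ⟨q, h1, h2, h3⟩ := hitT_lt_iff.mp hlt
  have h0q : (0 : ℝ) ≤ (q : ℝ) := le_trans h0a h1
  have hle : hitT a A φ ≤ ENNReal.ofReal q := hitT_le h1 h2
  refine ⟨q, ?_, ?_, h1, h2⟩
  · have := ENNReal.toReal_mono ENNReal.ofReal_ne_top hle
    rwa [ENNReal.toReal_ofReal h0q] at this
  · have heq : hitT a A φ + ENNReal.ofReal δ = ENNReal.ofReal ((hitT a A φ).toReal + δ) := by
      rw [ENNReal.ofReal_add ENNReal.toReal_nonneg hδ.le, ENNReal.ofReal_toReal hfin]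
    rw [heq] at h3
    exact (ENNReal.ofReal_lt_ofReal_iff_of_nonneg h0q).mp h3

theorem hitT_not_mem {a : ℝ} {A : Set ℝ} {φ : ℝ → ℝ} (hA : IsOpen A) (hφ : Continuous φ)
    (h0a : 0 ≤ a) (hfin : hitT a A φ ≠ ∞) :
    ∀ u, a ≤ u → u < (hitT a A φ).toReal → φ u ∉ A := by
  intro u hau hu hmem
  obtain ⟨δ, hδ, hball⟩ := Metric.isOpen_iff.mp (hA.preimage hφ) u hmem
  obtain ⟨q, h1, h2⟩ := exists_rat_btwn
    (lt_min (lt_add_of_pos_right u hδ) hu)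
  have hq : φ q ∈ A := hball (show dist ((q : ℚ) : ℝ) u < δ by
    rw [Real.dist_eq, abs_sub_lt_iff]
    constructor
    · linarith [h2.trans_le (min_le_left (u + δ) _)]
    · linarith)
  have hlt : ENNReal.ofReal q < hitT a A φ := by
    rw [← ENNReal.ofReal_toReal hfin]
    exact (ENNReal.ofReal_lt_ofReal_iff_of_nonneg (le_trans h0a (hau.trans h1.le))).mpr
      (h2.trans_le (min_le_right _ _))
  exact absurd (hitT_le (hau.trans h1.le) hq) (not_le.mpr hlt)

/-- Rational first passage above level `L` of the regularized additive functional. -/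
def tauT (a L : ℝ) (ω : CPath E) : ℝ≥0∞ := hitT a (Set.Ioi L) fun b => phiT v a b ω

/-- Rational first passage below level `-L` of the regularized additive functional. -/
def tauMT (a L : ℝ) (ω : CPath E) : ℝ≥0∞ := hitT a (Set.Iio (-L)) fun b => phiT v a b ω

theorem le_tauT {a L : ℝ} {ω : CPath E} : ENNReal.ofReal a ≤ tauT v a L ω := le_hitT

theorem le_tauMT {a L : ℝ} {ω : CPath E} : ENNReal.ofReal a ≤ tauMT v a L ω := le_hitT

theorem tauT_toReal_ge {a L : ℝ} {ω : CPath E} (h0a : 0 ≤ a) (hfin : tauT v a L ω ≠ ∞) :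
    a ≤ (tauT v a L ω).toReal := hitT_toReal_ge h0a hfin

theorem tauMT_toReal_ge {a L : ℝ} {ω : CPath E} (h0a : 0 ≤ a) (hfin : tauMT v a L ω ≠ ∞) :
    a ≤ (tauMT v a L ω).toReal := hitT_toReal_ge h0a hfin

theorem tauT_pre {a L : ℝ} {ω : CPath E} (h0a : 0 ≤ a) (hfin : tauT v a L ω ≠ ∞) :
    ∀ u, a ≤ u → u < (tauT v a L ω).toReal → phiT v a u ω ≤ L := fun u h1 h2 =>
  not_lt.mp fun h => hitT_not_mem isOpen_Ioi (phiT_cont v a ω) h0a hfin u h1 h2 h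

theorem tauMT_pre {a L : ℝ} {ω : CPath E} (h0a : 0 ≤ a) (hfin : tauMT v a L ω ≠ ∞) :
    ∀ u, a ≤ u → u < (tauMT v a L ω).toReal → -L ≤ phiT v a u ω := fun u h1 h2 =>
  not_lt.mp fun h => hitT_not_mem isOpen_Iio (phiT_cont v a ω) h0a hfin u h1 h2 h

theorem tauT_phi {a L : ℝ} {ω : CPath E} (h0a : 0 ≤ a) (hL : 0 ≤ L)
    (hfin : tauT v a L ω ≠ ∞) : phiT v a ((tauT v a L ω).toReal) ω = L := by
  set ρ := (tauT v a L ω).toReal with hρdef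
  have hρa : a ≤ ρ := tauT_toReal_ge v h0a hfin
  have hcont := phiT_cont v a ω
  have hub : phiT v a ρ ω ≤ L := by
    rcases eq_or_lt_of_le hρa with heq | hlt
    · rw [← heq, phiT_same]; exact hL
    · by_contra hgt
      push_neg at hgt
      obtain ⟨δ, hδ, hball⟩ := Metric.isOpen_iff.mp (isOpen_Ioi.preimage hcont) ρ hgt
      obtain ⟨q, h1, h2⟩ := exists_rat_btwn
        (show max a (ρ - δ) < ρ from max_lt hlt (sub_lt_self ρ hδ))
      have hq : phiT v a q ω ∈ Set.Ioi L := hball (show dist ((q : ℚ) : ℝ) ρ < δ by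
        rw [Real.dist_eq, abs_sub_lt_iff]
        constructor
        · linarith
        · linarith [lt_of_le_of_lt (le_max_right a (ρ - δ)) h1])
      exact hitT_not_mem isOpen_Ioi hcont h0a hfin q
        (le_of_lt (lt_of_le_of_lt (le_max_left a (ρ - δ)) h1)) h2 hq
  have hlb : L ≤ phiT v a ρ ω := by
    by_contra hgt
    push_neg at hgt
    obtain ⟨δ, hδ, hball⟩ := Metric.isOpen_iff.mp (isOpen_Iio.preimage hcont) ρ hgt
    obtain ⟨q, h1, h2, _, hmem⟩ := hitT_approx h0a hfin hδ
    have h1' : ρ ≤ (q : ℝ) := h1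
    have h2' : (q : ℝ) < ρ + δ := h2
    have hlt : phiT v a (q : ℝ) ω < L := hball (show dist ((q : ℚ) : ℝ) ρ < δ by
      rw [Real.dist_eq, abs_sub_lt_iff]; constructor <;> linarith)
    exact absurd (Set.mem_Ioi.mp hmem) (not_lt.mpr hlt.le)
  linarith

theorem tauMT_phi {a L : ℝ} {ω : CPath E} (h0a : 0 ≤ a) (hL : 0 ≤ L)
    (hfin : tauMT v a L ω ≠ ∞) : phiT v a ((tauMT v a L ω).toReal) ω = -L := by
  set ρ := (tauMT v a L ω).toReal with hρdef
  have hρa : a ≤ ρ := tauMT_toReal_ge v h0a hfin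
  have hcont := phiT_cont v a ω
  have hub : -L ≤ phiT v a ρ ω := by
    rcases eq_or_lt_of_le hρa with heq | hlt
    · rw [← heq, phiT_same]; linarith
    · by_contra hgt
      push_neg at hgt
      obtain ⟨δ, hδ, hball⟩ := Metric.isOpen_iff.mp (isOpen_Iio.preimage hcont) ρ hgt
      obtain ⟨q, h1, h2⟩ := exists_rat_btwn
        (show max a (ρ - δ) < ρ from max_lt hlt (sub_lt_self ρ hδ))
      have hq : phiT v a q ω ∈ Set.Iio (-L) := hball (show dist ((q : ℚ) : ℝ) ρ < δ by
        rw [Real.dist_eq, abs_sub_lt_iff]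
        constructor
        · linarith
        · linarith [lt_of_le_of_lt (le_max_right a (ρ - δ)) h1])
      exact hitT_not_mem isOpen_Iio hcont h0a hfin q
        (le_of_lt (lt_of_le_of_lt (le_max_left a (ρ - δ)) h1)) h2 hq
  have hlb : phiT v a ρ ω ≤ -L := by
    by_contra hgt
    push_neg at hgt
    obtain ⟨δ, hδ, hball⟩ := Metric.isOpen_iff.mp (isOpen_Ioi.preimage hcont) ρ hgt
    obtain ⟨q, h1, h2, _, hmem⟩ := hitT_approx h0a hfin hδ
    have h1' : ρ ≤ (q : ℝ) := h1
    have h2' : (q : ℝ) < ρ + δ := h2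
    have hlt : -L < phiT v a (q : ℝ) ω := hball (show dist ((q : ℚ) : ℝ) ρ < δ by
      rw [Real.dist_eq, abs_sub_lt_iff]; constructor <;> linarith)
    exact absurd (Set.mem_Iio.mp hmem) (not_lt.mpr hlt.le)
  linarith

theorem tauT_mono {a L L' : ℝ} {ω : CPath E} (h : L ≤ L') : tauT v a L ω ≤ tauT v a L' ω :=
  le_iInf fun q => by
    split_ifs with hq
    · exact hitT_le hq.1 (Set.mem_Ioi.mpr (lt_of_le_of_lt h (Set.mem_Ioi.mp hq.2)))
    · exact le_top

theorem tauT_concat {a b c L : ℝ} {ω : CPath E} (hab : a ≤ b) (hc : phiT v a b ω = c)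
    (hLc : c ≤ L)
    (hpre : ∀ q : ℚ, a ≤ (q : ℝ) → (q : ℝ) ≤ b → phiT v a q ω ≤ L) :
    tauT v a L ω = tauT v b (L - c) ω := by
  apply le_antisymm
  · refine le_iInf fun q => ?_
    split_ifs with hq
    · have hadd := phiT_add v a b q ω
      have h2 := Set.mem_Ioi.mp hq.2
      exact hitT_le (hab.trans hq.1) (Set.mem_Ioi.mpr (by linarith))
    · exact le_top
  · refine le_iInf fun q => ?_
    split_ifs with hq
    · have hbq : b ≤ (q : ℝ) := by
        by_contra hql
        push_neg at hql
        exact absurd (Set.mem_Ioi.mp hq.2) (not_lt.mpr (hpre q hq.1 hql.le))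
      have hadd := phiT_add v a b q ω
      have h2 := Set.mem_Ioi.mp hq.2
      exact hitT_le hbq (Set.mem_Ioi.mpr (by linarith))
    · exact le_top

theorem tauMT_sign {a L : ℝ} {ω : CPath E} (hrlc : RLC a ω) (h0a : 0 ≤ a) (hL : 0 ≤ L)
    (hfin : tauMT v a L ω ≠ ∞) : v (ω ((tauMT v a L ω).toReal)) < 0 := by
  set ρ := (tauMT v a L ω).toReal with hρdef
  have hρa : a ≤ ρ := tauMT_toReal_ge v h0a hfin
  obtain ⟨ε, hε, hconst⟩ := hrlc ρ hρa
  have hφρ : phiT v a ρ ω = -L := tauMT_phi v h0a hL hfin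
  obtain ⟨q, h1, h2, h3, hmem⟩ := hitT_approx h0a hfin hε
  have h1' : ρ ≤ (q : ℝ) := h1
  have h2' : (q : ℝ) < ρ + ε := h2
  have hmem' : phiT v a (q : ℝ) ω < -L := Set.mem_Iio.mp hmem
  have hqρ : ρ < (q : ℝ) := by
    rcases eq_or_lt_of_le h1' with heq | hlt
    · exfalso; rw [← heq] at hmem'; rw [hφρ] at hmem'; linarith
    · exact hlt
  have hseg : phiT v ρ q ω = v (ω ρ) * ((q : ℝ) - ρ) := by
    rw [phiT, intervalIntegral.integral_congr (g := fun _ => v (ω ρ))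
      (fun u hu => by
        rw [Set.uIcc_of_le hqρ.le] at hu
        rw [hrlc.reg_eq (hρa.trans hu.1), hconst u ⟨hu.1, lt_of_le_of_lt hu.2 h2'⟩]),
      intervalIntegral.integral_const, smul_eq_mul]
    ring
  have hcomb := phiT_add v a ρ q ω
  have hneg : v (ω ρ) * ((q : ℝ) - ρ) < 0 := by
    rw [hφρ] at hcomb; linarith
  by_contra hpos
  push_neg at hpos
  nlinarith

theorem tauT_sign {a L : ℝ} {ω : CPath E} (hrlc : RLC a ω) (h0a : 0 ≤ a) (hL : 0 ≤ L)
    (hfin : tauT v a L ω ≠ ∞) : 0 < v (ω ((tauT v a L ω).toReal)) := by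
  set ρ := (tauT v a L ω).toReal with hρdef
  have hρa : a ≤ ρ := tauT_toReal_ge v h0a hfin
  obtain ⟨ε, hε, hconst⟩ := hrlc ρ hρa
  have hφρ : phiT v a ρ ω = L := tauT_phi v h0a hL hfin
  obtain ⟨q, h1, h2, h3, hmem⟩ := hitT_approx h0a hfin hε
  have h1' : ρ ≤ (q : ℝ) := h1
  have h2' : (q : ℝ) < ρ + ε := h2
  have hmem' : L < phiT v a (q : ℝ) ω := Set.mem_Ioi.mp hmem
  have hqρ : ρ < (q : ℝ) := by
    rcases eq_or_lt_of_le h1' with heq | hlt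
    · exfalso; rw [← heq] at hmem'; rw [hφρ] at hmem'; linarith
    · exact hlt
  have hseg : phiT v ρ q ω = v (ω ρ) * ((q : ℝ) - ρ) := by
    rw [phiT, intervalIntegral.integral_congr (g := fun _ => v (ω ρ))
      (fun u hu => by
        rw [Set.uIcc_of_le hqρ.le] at hu
        rw [hrlc.reg_eq (hρa.trans hu.1), hconst u ⟨hu.1, lt_of_le_of_lt hu.2 h2'⟩]),
      intervalIntegral.integral_const, smul_eq_mul]
    ring
  have hcomb := phiT_add v a ρ q ω
  have hposm : 0 < v (ω ρ) * ((q : ℝ) - ρ) := by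
    rw [hφρ] at hcomb; linarith
  by_contra hneg
  push_neg at hneg
  nlinarith

theorem tauT_ne_tauMT {s ℓp ℓm : ℝ} {ω : CPath E} (hrlc : RLC s ω) (h0s : 0 ≤ s)
    (hℓp : 0 ≤ ℓp) (hℓm : 0 ≤ ℓm) (heq : tauT v s ℓp ω = tauMT v s ℓm ω) :
    tauT v s ℓp ω = ∞ := by
  by_contra hfin
  have h1 := tauT_sign v hrlc h0s hℓp hfin
  have h2 := tauMT_sign v hrlc h0s hℓm (by rw [← heq]; exact hfin)
  rw [← heq] at h2
  linarith

theorem phi_eq_phiT {a u : ℝ} {ω : CPath E} (hrlc : RLC a ω) (hau : a ≤ u) :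
    phi v a u ω = phiT v a u ω := by
  rw [phi, phiT]
  apply intervalIntegral.integral_congr
  intro r hr
  rw [Set.uIcc_of_le hau] at hr
  simp only []
  rw [hrlc.reg_eq hr.1]

theorem tauP_eq_tauT {a L : ℝ} {ω : CPath E} (hrlc : RLC a ω) (h0a : 0 ≤ a) (hL : 0 ≤ L) :
    tauP v a L ω = tauT v a L ω := by
  apply le_antisymm
  · refine le_iInf fun q => ?_
    split_ifs with hq
    · exact sInf_le ⟨(q : ℝ), hq.1, rfl, by
        rw [phi_eq_phiT v hrlc hq.1]; exact Set.mem_Ioi.mp hq.2⟩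
    · exact le_top
  · apply le_sInf
    rintro x ⟨u, hau, rfl, hgt⟩
    rw [phi_eq_phiT v hrlc hau] at hgt
    have hua : a < u := by
      rcases eq_or_lt_of_le hau with heq | h
      · exfalso; rw [← heq, phiT_same] at hgt; linarith
      · exact h
    have hcont := phiT_cont v a ω
    obtain ⟨δ, hδ, hball⟩ := Metric.isOpen_iff.mp (isOpen_Ioi.preimage hcont) u hgt
    obtain ⟨q, h1, h2⟩ := exists_rat_btwn
      (show max a (u - δ) < u from max_lt hua (sub_lt_self u hδ))
    have hq : phiT v a q ω ∈ Set.Ioi L := hball (show dist ((q : ℚ) : ℝ) u < δ by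
      rw [Real.dist_eq, abs_sub_lt_iff]
      constructor
      · linarith
      · linarith [lt_of_le_of_lt (le_max_right a (u - δ)) h1])
    exact le_trans (hitT_le (le_of_lt (lt_of_le_of_lt (le_max_left a (u - δ)) h1)) hq)
      (ENNReal.ofReal_le_ofReal h2.le)

theorem tauM_eq_tauMT {a L : ℝ} {ω : CPath E} (hrlc : RLC a ω) (h0a : 0 ≤ a) (hL : 0 ≤ L) :
    tauM v a L ω = tauMT v a L ω := by
  apply le_antisymm
  · refine le_iInf fun q => ?_
    split_ifs with hq
    · exact sInf_le ⟨(q : ℝ), hq.1, rfl, by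
        rw [phi_eq_phiT v hrlc hq.1]; exact Set.mem_Iio.mp hq.2⟩
    · exact le_top
  · apply le_sInf
    rintro x ⟨u, hau, rfl, hlt⟩
    rw [phi_eq_phiT v hrlc hau] at hlt
    have hua : a < u := by
      rcases eq_or_lt_of_le hau with heq | h
      · exfalso; rw [← heq, phiT_same] at hlt; linarith
      · exact h
    have hcont := phiT_cont v a ω
    obtain ⟨δ, hδ, hball⟩ := Metric.isOpen_iff.mp (isOpen_Iio.preimage hcont) u hlt
    obtain ⟨q, h1, h2⟩ := exists_rat_btwn
      (show max a (u - δ) < u from max_lt hua (sub_lt_self u hδ))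
    have hq : phiT v a q ω ∈ Set.Iio (-L) := hball (show dist ((q : ℚ) : ℝ) u < δ by
      rw [Real.dist_eq, abs_sub_lt_iff]
      constructor
      · linarith
      · linarith [lt_of_le_of_lt (le_max_right a (u - δ)) h1])
    exact le_trans (hitT_le (le_of_lt (lt_of_le_of_lt (le_max_left a (u - δ)) h1)) hq)
      (ENNReal.ofReal_le_ofReal h2.le)


theorem nat_denom_pos (n N : ℕ) : (0 : ℝ) < (n : ℝ) + N + 1 := by
  have h1 := Nat.cast_nonneg (α := ℝ) n
  have h2 := Nat.cast_nonneg (α := ℝ) N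
  linarith

theorem nat_one_div_pos (n N : ℕ) : (0 : ℝ) < 1/((n : ℝ) + N + 1) :=
  one_div_pos.mpr (nat_denom_pos n N)

theorem ofReal_one_div_ne_zero (n N : ℕ) : ENNReal.ofReal (1/((n : ℝ) + N + 1)) ≠ 0 := by
  rw [Ne, ENNReal.ofReal_eq_zero, not_le]
  exact nat_one_div_pos n N

theorem ennreal_le_of_le_add {t x : ℝ≥0∞} (ht : t ≠ ∞) (N : ℕ)
    (h : ∀ n : ℕ, x ≤ t + ENNReal.ofReal (1/((n : ℝ) + N + 1))) : x ≤ t := by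
  by_contra hgt
  push_neg at hgt
  obtain ⟨ε, hε, hlt⟩ := ENNReal.lt_iff_exists_add_pos_lt.mp hgt
  obtain ⟨n, hn⟩ := exists_nat_one_div_lt (show (0 : ℝ) < (ε : ℝ) by exact_mod_cast hε)
  have hcon : ENNReal.ofReal (1/((n : ℝ) + N + 1)) ≤ (ε : ℝ≥0∞) := by
    rw [← ENNReal.ofReal_coe_nnreal]
    apply ENNReal.ofReal_le_ofReal
    calc (1 : ℝ)/((n : ℝ) + N + 1) ≤ 1/((n : ℝ) + 1) :=
          one_div_le_one_div_of_le (by linarith [Nat.cast_nonneg (α := ℝ) n])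
            (by linarith [Nat.cast_nonneg (α := ℝ) N])
      _ ≤ (ε : ℝ) := hn.le
  exact lt_irrefl x (lt_of_le_of_lt ((h n).trans (add_le_add_right hcon t)) hlt)

theorem ennreal_ofReal_lt_shift {t : ℝ≥0∞} (ht : t ≠ ∞) {q c : ℝ} (h0q : 0 ≤ (q : ℝ))
    (hc : 0 ≤ c) (h : ENNReal.ofReal q < t + ENNReal.ofReal c) : q < t.toReal + c := by
  have heq : t + ENNReal.ofReal c = ENNReal.ofReal (t.toReal + c) := by
    rw [ENNReal.ofReal_add ENNReal.toReal_nonneg hc, ENNReal.ofReal_toReal ht]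
  rw [heq] at h
  exact (ENNReal.ofReal_lt_ofReal_iff_of_nonneg h0q).mp h

theorem ennreal_shift_eq {t : ℝ≥0∞} (ht : t ≠ ∞) {c : ℝ} (hc : 0 ≤ c) :
    ENNReal.ofReal (t.toReal + c) = t + ENNReal.ofReal c := by
  rw [ENNReal.ofReal_add ENNReal.toReal_nonneg hc, ENNReal.ofReal_toReal ht]

/-- The window index type. -/
abbrev Win (s r : ℝ) := {q : ℚ // s ≤ (q : ℝ) ∧ (q : ℝ) ≤ r}

/-- Reconstruct a path from its restriction to rationals in the window. -/
def extW (s r : ℝ) (x : Win s r → Option E) : CPath E :=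
  fun u => if h : ∃ p : Win s r, ((p : ℚ) : ℝ) = u then x h.choose else none

/-- Restriction of a path to the rationals in a window. -/
def resW (s r : ℝ) (ω : CPath E) : Win s r → Option E := fun p => ω ((p : ℚ) : ℝ)

theorem measurable_extW (s r : ℝ) : Measurable (extW (E := E) s r) := by
  apply measurable_pi_lambda
  intro u
  by_cases h : ∃ p : Win s r, ((p : ℚ) : ℝ) = u
  · simp only [extW, dif_pos h]
    exact measurable_pi_apply _
  · simp only [extW, dif_neg h]
    exact measurable_const

theorem extW_resW_rat (s r : ℝ) (ω : CPath E) {q' : ℚ} (h1 : s ≤ (q' : ℝ)) (h2 : (q' : ℝ) ≤ r) :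
    extW s r (resW s r ω) ((q' : ℚ) : ℝ) = ω q' := by
  have hex : ∃ p : Win s r, ((p : ℚ) : ℝ) = ((q' : ℚ) : ℝ) := ⟨⟨q', h1, h2⟩, rfl⟩
  rw [extW, dif_pos hex]
  exact congrArg ω hex.choose_spec

theorem reg_extW_resW (s r : ℝ) (ω : CPath E) {u : ℝ} (hu : s ≤ u) (hur : u < r) :
    reg ω u = reg (extW s r (resW s r ω)) u :=
  reg_congr hur fun q' hq1 hq2 => (extW_resW_rat s r ω (hu.trans hq1.le) hq2.le).symm

theorem phiT_extW_resW (s r : ℝ) (ω : CPath E) {q : ℚ} (hq1 : s ≤ (q : ℝ)) (hq2 : (q : ℝ) < r) :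
    phiT v s q (extW s r (resW s r ω)) = phiT v s q ω := by
  rw [phiT, phiT]
  apply intervalIntegral.integral_congr
  intro u hu
  rw [Set.uIcc_of_le hq1] at hu
  simp only []
  rw [← reg_extW_resW s r ω hu.1 (lt_of_le_of_lt hu.2 hq2)]

theorem measurable_resW_natF (s r : ℝ) : Measurable[natF s r] (resW (E := E) s r) := by
  refine (@measurable_pi_iff _ _ _ (natF s r) _ _).mpr fun p => ?_
  apply Measurable.of_comap_le
  exact le_iSup₂ (f := fun (u : ℝ) (_ : u ∈ Set.Icc s r) =>
    MeasurableSpace.comap (fun ω : CPath E => ω u) ⊤) ((p : ℚ) : ℝ) ⟨p.2.1, p.2.2⟩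

theorem natF_of_window {s r : ℝ} {A : Set (CPath E)} {B : Set (Win s r → Option E)}
    (hB : MeasurableSet B) (hAB : A = resW s r ⁻¹' B) : MeasurableSet[natF s r] A :=
  hAB ▸ (measurable_resW_natF s r) hB

theorem natF_phiT_mem {s r : ℝ} {q : ℚ} (hq1 : s ≤ (q : ℝ)) (hq2 : (q : ℝ) < r) (S : Set ℝ)
    (hS : MeasurableSet S) : MeasurableSet[natF s r] {ω : CPath E | phiT v s q ω ∈ S} := by
  apply natF_of_window (B := {x : Win s r → Option E | phiT v s q (extW s r x) ∈ S})
  · exact ((measurable_phiT v s q).comp (measurable_extW s r)) hS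
  · ext ω
    simp only [Set.mem_setOf_eq, Set.mem_preimage]
    rw [phiT_extW_resW v s r ω hq1 hq2]

theorem natF_le_pi (s r : ℝ) : natF (E := E) s r ≤ MeasurableSpace.pi :=
  iSup₂_le fun u _ => Measurable.comap_le (measurable_pi_apply u)

theorem fst_le_pi (s : ℝ) (t : ℝ≥0∞) : Fst (E := E) s t ≤ MeasurableSpace.pi := by
  rw [Fst]
  split_ifs with ht
  · exact iSup₂_le fun u _ => Measurable.comap_le (measurable_pi_apply u)
  · exact le_trans (iInf₂_le (t.toReal + 1) (Set.mem_Ioi.mpr (lt_add_one _)))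
      (natF_le_pi s (t.toReal + 1))

theorem isST_tauT (s L : ℝ) (h0s : 0 ≤ s) : IsST s (tauT (E := E) v s L) := by
  intro t
  by_cases ht : t = ∞
  · subst ht
    have huniv : {ω : CPath E | tauT v s L ω ≤ ∞} = Set.univ := by
      ext ω; simp
    rw [huniv]
    exact MeasurableSet.univ
  · unfold Fst
    rw [if_neg ht]
    refine measurableSet_iInf.mpr fun r => measurableSet_iInf.mpr fun hr => ?_
    rw [Set.mem_Ioi] at hr
    obtain ⟨N, hN⟩ := exists_nat_one_div_lt (show (0 : ℝ) < r - t.toReal from sub_pos.mpr hr)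
    have hclaim : {ω : CPath E | tauT v s L ω ≤ t} = ⋂ n : ℕ, ⋃ q : ℚ,
        ⋃ (_ : s ≤ (q : ℝ) ∧ (q : ℝ) < t.toReal + 1/((n : ℝ) + N + 1)),
        {ω : CPath E | phiT v s q ω ∈ Set.Ioi L} := by
      ext ω
      simp only [Set.mem_setOf_eq, Set.mem_iInter, Set.mem_iUnion]
      constructor
      · intro hle n
        have hpos : (0 : ℝ) < 1/((n : ℝ) + N + 1) := nat_one_div_pos n N
        have hlt : tauT v s L ω < t + ENNReal.ofReal (1/((n : ℝ) + N + 1)) :=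
          lt_of_le_of_lt hle (ENNReal.lt_add_right ht (ofReal_one_div_ne_zero n N))
        obtain ⟨q, h1, h2, h3⟩ := hitT_lt_iff.mp hlt
        exact ⟨q, ⟨h1, ennreal_ofReal_lt_shift ht (le_trans h0s h1) hpos.le h3⟩, h2⟩
      · intro h
        refine ennreal_le_of_le_add ht N fun n => ?_
        obtain ⟨q, ⟨h1, h2⟩, h3⟩ := h n
        refine le_trans (hitT_le h1 h3) ?_
        rw [← ennreal_shift_eq ht ((nat_one_div_pos n N).le)]
        exact ENNReal.ofReal_le_ofReal h2.le
    rw [hclaim]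
    refine MeasurableSet.iInter fun n => MeasurableSet.iUnion fun q =>
      MeasurableSet.iUnion fun hq => ?_
    refine natF_phiT_mem v hq.1 ?_ _ measurableSet_Ioi
    have h1N : 1/((n : ℝ) + N + 1) ≤ 1/((N : ℝ) + 1) :=
      one_div_le_one_div_of_le (by linarith [Nat.cast_nonneg (α := ℝ) N])
        (by linarith [Nat.cast_nonneg (α := ℝ) n])
    linarith [hq.2]

/-- The (tilde) version of `xiM`. -/
def xiMT (s ℓm ℓp : ℝ) (ω : CPath E) : ℝ≥0∞ :=
  if tauMT v s ℓm ω < tauT v s ℓp ω then tauMT v s ℓm ω else ∞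

theorem xiMT_ge (s ℓm ℓp : ℝ) (ω : CPath E) : ENNReal.ofReal s ≤ xiMT v s ℓm ℓp ω := by
  rw [xiMT]
  split_ifs
  · exact le_tauMT v
  · exact le_top

theorem tauT_ge' (s L : ℝ) (ω : CPath E) : ENNReal.ofReal s ≤ tauT v s L ω := le_tauT v

theorem isST_xiMT (s ℓm ℓp : ℝ) (h0s : 0 ≤ s) : IsST s (xiMT (E := E) v s ℓm ℓp) := by
  intro t
  by_cases ht : t = ∞
  · subst ht
    have huniv : {ω : CPath E | xiMT v s ℓm ℓp ω ≤ ∞} = Set.univ := by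
      ext ω; simp
    rw [huniv]
    exact MeasurableSet.univ
  · unfold Fst
    rw [if_neg ht]
    refine measurableSet_iInf.mpr fun r => measurableSet_iInf.mpr fun hr => ?_
    rw [Set.mem_Ioi] at hr
    obtain ⟨N, hN⟩ := exists_nat_one_div_lt
      (show (0 : ℝ) < (r - t.toReal)/2 from by linarith [sub_pos.mpr hr])
    have hclaim : {ω : CPath E | xiMT v s ℓm ℓp ω ≤ t} = ⋃ m : ℕ, ⋂ n : ℕ, ⋃ q : ℚ,
        ⋃ (_ : s ≤ (q : ℝ) ∧ (q : ℝ) < t.toReal + 1/((n : ℝ) + N + 1)),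
        ({ω : CPath E | phiT v s q ω ∈ Set.Iio (-ℓm)} ∩
          ⋂ q' : ℚ, ⋂ (_ : s ≤ (q' : ℝ) ∧ (q' : ℝ) ≤ (q : ℝ) + 1/((m : ℝ) + N + 1)),
            {ω : CPath E | phiT v s q' ω ∈ Set.Iic ℓp}) := by
      ext ω
      simp only [Set.mem_setOf_eq, Set.mem_iInter, Set.mem_iUnion, Set.mem_inter_iff]
      constructor
      · intro hle
        have hord : tauMT v s ℓm ω < tauT v s ℓp ω ∧ tauMT v s ℓm ω ≤ t := by
          by_cases hc : tauMT v s ℓm ω < tauT v s ℓp ω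
          · rw [xiMT, if_pos hc] at hle; exact ⟨hc, hle⟩
          · rw [xiMT, if_neg hc] at hle; exact absurd (top_le_iff.mp hle) ht
        have hτfin : tauMT v s ℓm ω ≠ ∞ := fun hcon => ht (top_le_iff.mp (hcon ▸ hord.2))
        obtain ⟨ε, hε, hlt⟩ := ENNReal.lt_iff_exists_add_pos_lt.mp hord.1
        obtain ⟨m, hm⟩ := exists_nat_one_div_lt
          (show (0 : ℝ) < (ε : ℝ)/2 from by positivity)
        have hm2 : ENNReal.ofReal (2/((m : ℝ) + N + 1)) ≤ (ε : ℝ≥0∞) := by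
          rw [← ENNReal.ofReal_coe_nnreal]
          apply ENNReal.ofReal_le_ofReal
          have hx : (1 : ℝ)/((m : ℝ) + N + 1) ≤ 1/((m : ℝ) + 1) :=
            one_div_le_one_div_of_le (by linarith [Nat.cast_nonneg (α := ℝ) m])
              (by linarith [Nat.cast_nonneg (α := ℝ) N])
          have e1 : (2 : ℝ)/((m : ℝ) + N + 1) = 2 * (1/((m : ℝ) + N + 1)) := by ring
          have e2 : (2 : ℝ)/((m : ℝ) + 1) = 2 * (1/((m : ℝ) + 1)) := by ring
          rw [e1]
          rw [e2] at *
          linarith [hm]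
        refine ⟨m, fun n => ?_⟩
        have hpos : (0 : ℝ) < 1/((n : ℝ) + N + 1) := nat_one_div_pos n N
        have hposm : (0 : ℝ) < 1/((m : ℝ) + N + 1) := nat_one_div_pos m N
        have hlt2 : tauMT v s ℓm ω < min (t + ENNReal.ofReal (1/((n : ℝ) + N + 1)))
            (tauMT v s ℓm ω + ENNReal.ofReal (1/((m : ℝ) + N + 1))) := by
          refine lt_min (lt_of_le_of_lt hord.2 (ENNReal.lt_add_right ht
            (ofReal_one_div_ne_zero n N))) ?_
          exact ENNReal.lt_add_right hτfin (ofReal_one_div_ne_zero m N)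
        obtain ⟨q, h1, h2, h3⟩ := hitT_lt_iff.mp hlt2
        have h3a : ENNReal.ofReal q < t + ENNReal.ofReal (1/((n : ℝ) + N + 1)) :=
          lt_of_lt_of_le h3 (min_le_left _ _)
        have h3b : ENNReal.ofReal q < tauMT v s ℓm ω + ENNReal.ofReal (1/((m : ℝ) + N + 1)) :=
          lt_of_lt_of_le h3 (min_le_right _ _)
        refine ⟨q, ⟨h1, ennreal_ofReal_lt_shift ht (le_trans h0s h1) hpos.le h3a⟩, h2, ?_⟩
        intro q' hq'
        rw [Set.mem_Iic]
        by_contra hgt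
        push_neg at hgt
        have hτp : tauT v s ℓp ω ≤ ENNReal.ofReal q' := hitT_le hq'.1 (Set.mem_Ioi.mpr hgt)
        have hchain : ENNReal.ofReal (q' : ℝ) < tauT v s ℓp ω := by
          calc ENNReal.ofReal (q' : ℝ) ≤ ENNReal.ofReal ((q : ℝ) + 1/((m : ℝ) + N + 1)) :=
                ENNReal.ofReal_le_ofReal hq'.2
            _ = ENNReal.ofReal q + ENNReal.ofReal (1/((m : ℝ) + N + 1)) :=
                ENNReal.ofReal_add (le_trans h0s h1) hposm.le
            _ < tauMT v s ℓm ω + ENNReal.ofReal (1/((m : ℝ) + N + 1))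
                + ENNReal.ofReal (1/((m : ℝ) + N + 1)) := by
                exact ENNReal.add_lt_add_right (by simp [ENNReal.ofReal_ne_top]) h3b
            _ = tauMT v s ℓm ω + ENNReal.ofReal (2/((m : ℝ) + N + 1)) := by
                rw [add_assoc, ← ENNReal.ofReal_add hposm.le hposm.le]
                congr 1
                ring_nf
            _ ≤ tauMT v s ℓm ω + (ε : ℝ≥0∞) := add_le_add_right hm2 _
            _ < tauT v s ℓp ω := hlt
        exact absurd hτp (not_le.mpr hchain)
      · rintro ⟨m, hm⟩
        have hposm : (0 : ℝ) < 1/((m : ℝ) + N + 1) := nat_one_div_pos m N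
        have hτmle : tauMT v s ℓm ω ≤ t := by
          refine ennreal_le_of_le_add ht N fun n => ?_
          obtain ⟨q, ⟨h1, h2⟩, h3, _⟩ := hm n
          refine le_trans (hitT_le h1 h3) ?_
          rw [← ennreal_shift_eq ht ((nat_one_div_pos n N).le)]
          exact ENNReal.ofReal_le_ofReal h2.le
        obtain ⟨q, ⟨h1, h2⟩, h3, h4⟩ := hm 0
        have hτmq : tauMT v s ℓm ω ≤ ENNReal.ofReal q := hitT_le h1 h3
        have hτp : ENNReal.ofReal q + ENNReal.ofReal (1/((m : ℝ) + N + 1)) ≤ tauT v s ℓp ω := by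
          refine le_iInf fun q' => ?_
          split_ifs with hq'
          · have hq'big : (q : ℝ) + 1/((m : ℝ) + N + 1) < (q' : ℝ) := by
              by_contra hq'le
              push_neg at hq'le
              have := h4 q' ⟨hq'.1, hq'le⟩
              rw [Set.mem_Iic] at this
              exact absurd (Set.mem_Ioi.mp hq'.2) (not_lt.mpr this)
            calc ENNReal.ofReal q + ENNReal.ofReal (1/((m : ℝ) + N + 1))
                = ENNReal.ofReal ((q : ℝ) + 1/((m : ℝ) + N + 1)) :=
                  (ENNReal.ofReal_add (le_trans h0s h1) hposm.le).symm
              _ ≤ ENNReal.ofReal q' := ENNReal.ofReal_le_ofReal hq'big.le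
          · exact le_top
        have hlt : tauMT v s ℓm ω < tauT v s ℓp ω := by
          refine lt_of_le_of_lt hτmq (lt_of_lt_of_le ?_ hτp)
          exact ENNReal.lt_add_right ENNReal.ofReal_ne_top (ofReal_one_div_ne_zero m N)
        rw [xiMT, if_pos hlt]
        exact hτmle
    rw [hclaim]
    have hNr : 1/((N : ℝ) + 1) < (r - t.toReal)/2 := hN
    refine MeasurableSet.iUnion fun m => MeasurableSet.iInter fun n =>
      MeasurableSet.iUnion fun q => MeasurableSet.iUnion fun hq => ?_
    have h1N : 1/((n : ℝ) + N + 1) ≤ 1/((N : ℝ) + 1) :=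
      one_div_le_one_div_of_le (by linarith [Nat.cast_nonneg (α := ℝ) N])
        (by linarith [Nat.cast_nonneg (α := ℝ) n])
    have h1M : 1/((m : ℝ) + N + 1) ≤ 1/((N : ℝ) + 1) :=
      one_div_le_one_div_of_le (by linarith [Nat.cast_nonneg (α := ℝ) N])
        (by linarith [Nat.cast_nonneg (α := ℝ) m])
    refine MeasurableSet.inter ?_ ?_
    · refine natF_phiT_mem v hq.1 ?_ _ measurableSet_Iio
      linarith [hq.2]
    · refine MeasurableSet.iInter fun q' => MeasurableSet.iInter fun hq' => ?_
      refine natF_phiT_mem v hq'.1 ?_ _ measurableSet_Iic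
      linarith [hq'.2, hq.2]


set_option maxHeartbeats 1000000 in
theorem measurable_tauT_omega (a L : ℝ) : Measurable fun ω : CPath E => tauT v a L ω := by
  unfold tauT hitT
  refine Measurable.iInf fun q => ?_
  refine Measurable.ite ?_ measurable_const measurable_const
  simp only [Set.mem_Ioi, Set.setOf_and]
  refine MeasurableSet.inter ?_ ?_
  · by_cases haq : a ≤ (q : ℝ)
    · simp only [haq, Set.setOf_true]; exact MeasurableSet.univ
    · simp only [haq, Set.setOf_false]; exact MeasurableSet.empty
  · exact measurableSet_lt measurable_const (measurable_phiT v a q)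

set_option maxHeartbeats 1000000 in
theorem measurable_tauMT_omega (a L : ℝ) : Measurable fun ω : CPath E => tauMT v a L ω := by
  unfold tauMT hitT
  refine Measurable.iInf fun q => ?_
  refine Measurable.ite ?_ measurable_const measurable_const
  simp only [Set.mem_Iio, Set.setOf_and]
  refine MeasurableSet.inter ?_ ?_
  · by_cases haq : a ≤ (q : ℝ)
    · simp only [haq, Set.setOf_true]; exact MeasurableSet.univ
    · simp only [haq, Set.setOf_false]; exact MeasurableSet.empty
  · exact measurableSet_lt (measurable_phiT v a q) measurable_const

set_option maxHeartbeats 1000000 in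
theorem measurable_tauT_joint' (L : ℝ) :
    Measurable fun p : ℝ × CPath E => tauT v p.1 L p.2 := by
  have heq : (fun p : ℝ × CPath E => tauT v p.1 L p.2)
      = fun p => ⨅ q : ℚ, if p.1 ≤ (q : ℝ) ∧ L < phiT v p.1 (q : ℝ) p.2
          then ENNReal.ofReal q else ∞ := by
    funext p
    unfold tauT hitT
    exact iInf_congr fun q => rfl
  rw [heq]
  refine Measurable.iInf fun q => ?_
  refine Measurable.ite ?_ measurable_const measurable_const
  refine MeasurableSet.inter ?_ ?_
  · exact measurableSet_le measurable_fst measurable_const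
  · exact measurableSet_lt measurable_const (measurable_phiT_start v q)

theorem measurable_tauT_joint (L : ℝ) :
    Measurable fun p : ℝ≥0∞ × CPath E => tauT v p.1.toReal L p.2 :=
  (measurable_tauT_joint' v L).comp
    ((ENNReal.measurable_toReal.comp measurable_fst).prodMk measurable_snd)

theorem measurable_g_uncurry {g : ℝ≥0∞ → Option E → ℝ} (hg1 : ∀ j, Measurable fun t => g t j) :
    Measurable fun r : ℝ≥0∞ × Option E => g r.1 r.2 := by
  intro S hS
  have hrw : (fun r : ℝ≥0∞ × Option E => g r.1 r.2) ⁻¹' S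
      = ⋃ j : Option E, {t : ℝ≥0∞ | g t j ∈ S} ×ˢ ({j} : Set (Option E)) := by
    ext r
    simp only [Set.mem_preimage, Set.mem_iUnion, Set.mem_prod, Set.mem_setOf_eq,
      Set.mem_singleton_iff]
    constructor
    · intro h
      exact ⟨r.2, h, rfl⟩
    · rintro ⟨j, h1, h2⟩
      rw [h2]
      exact h1
  rw [hrw]
  refine MeasurableSet.iUnion fun j => MeasurableSet.prod ((hg1 j) hS) ?_
  exact (measurableSet_top : MeasurableSet[⊤] ({j} : Set (Option E)))

/-- The state at an extended time along the regularized path. -/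
def XTf (T : ℝ≥0∞) (ω : CPath E) : Option E := if T = ∞ then none else reg ω T.toReal

theorem measurable_XTf {α : Type*} [MeasurableSpace α] {T : α → ℝ≥0∞} {W : α → CPath E}
    (hT : Measurable T) (hW : Measurable W) : Measurable fun x => XTf (T x) (W x) := by
  intro S _
  have hrw : (fun x => XTf (T x) (W x)) ⁻¹' S = ⋃ j ∈ S, {x | XTf (T x) (W x) = j} := by
    ext x; simp [Set.mem_preimage]
  rw [hrw]
  refine MeasurableSet.biUnion (Set.to_countable S) fun j _ => ?_
  have hB : MeasurableSet {x | reg (W x) ((T x).toReal) = j} := by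
    have hm : Measurable fun x => reg (W x) ((T x).toReal) :=
      measurable_reg.comp ((ENNReal.measurable_toReal.comp hT).prodMk hW)
    exact hm (measurableSet_top : MeasurableSet[⊤] ({j} : Set (Option E)))
  have hA : MeasurableSet {x | T x = ∞} := hT (measurableSet_singleton ∞)
  by_cases hj : j = none
  · subst hj
    have : {x | XTf (T x) (W x) = none}
        = {x | T x = ∞} ∪ ({x | T x = ∞}ᶜ ∩ {x | reg (W x) ((T x).toReal) = none}) := by
      ext x
      simp only [XTf, Set.mem_setOf_eq, Set.mem_union, Set.mem_inter_iff, Set.mem_compl_iff]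
      by_cases hx : T x = ∞ <;> simp [hx]
    rw [this]
    exact hA.union (hA.compl.inter hB)
  · have : {x | XTf (T x) (W x) = j}
        = {x | T x = ∞}ᶜ ∩ {x | reg (W x) ((T x).toReal) = j} := by
      ext x
      simp only [XTf, Set.mem_setOf_eq, Set.mem_inter_iff, Set.mem_compl_iff]
      by_cases hx : T x = ∞ <;> simp [hx, hj]
      exact fun h => hj h.symm
    rw [this]
    exact hA.compl.inter hB

/-- The functional used in the strong Markov argument: evaluate `g` at the
first passage (above level `L2`) of the regularized path started at time `t`. -/
def Gf (L2 : ℝ) (g : ℝ≥0∞ → Option E → ℝ) (t : ℝ≥0∞) (ω : CPath E) : ℝ :=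
  g (tauT v t.toReal L2 ω) (XTf (tauT v t.toReal L2 ω) ω)

theorem measurable_Gf (L2 : ℝ) {g : ℝ≥0∞ → Option E → ℝ}
    (hg1 : ∀ j, Measurable fun t => g t j) :
    Measurable (Function.uncurry (Gf v L2 g)) := by
  have hT : Measurable fun p : ℝ≥0∞ × CPath E => tauT v p.1.toReal L2 p.2 :=
    measurable_tauT_joint v L2
  have hX : Measurable fun p : ℝ≥0∞ × CPath E =>
      XTf (tauT v p.1.toReal L2 p.2) p.2 := measurable_XTf hT measurable_snd
  exact (measurable_g_uncurry hg1).comp (hT.prodMk hX)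

theorem phiT_congr_future {a b : ℝ} {ω ω' : CPath E} (hab : a ≤ b)
    (h : ∀ u, a ≤ u → reg ω u = reg ω' u) : phiT v a b ω = phiT v a b ω' := by
  rw [phiT, phiT]
  apply intervalIntegral.integral_congr
  intro u hu
  rw [Set.uIcc_of_le hab] at hu
  simp only []
  rw [h u hu.1]

set_option maxHeartbeats 1000000 in
theorem tauT_congr_future {a L : ℝ} {ω ω' : CPath E}
    (h : ∀ u, a ≤ u → reg ω u = reg ω' u) : tauT v a L ω = tauT v a L ω' := by
  unfold tauT hitT
  apply iInf_congr
  intro q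
  by_cases haq : a ≤ (q : ℝ)
  · have heq : phiT v a (q : ℝ) ω = phiT v a (q : ℝ) ω' := phiT_congr_future v haq h
    by_cases hmem : phiT v a (q : ℝ) ω ∈ Set.Ioi L
    · refine (if_pos ⟨haq, hmem⟩).trans (if_pos ⟨haq, ?_⟩).symm
      show phiT v a (q : ℝ) ω' ∈ Set.Ioi L
      rwa [← heq]
    · rw [if_neg, if_neg]
      · rintro ⟨-, hc⟩
        have hc' : phiT v a (q : ℝ) ω' ∈ Set.Ioi L := hc
        rw [← heq] at hc'
        exact hmem hc'
      · rintro ⟨-, hc⟩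
        exact hmem hc
  · rw [if_neg (fun hc => haq hc.1), if_neg (fun hc => haq hc.1)]

theorem reg_congr_of_agree {t₀ : ℝ} {ω ω' : CPath E} (h : ∀ u, t₀ ≤ u → ω u = ω' u) :
    ∀ u, t₀ ≤ u → reg ω u = reg ω' u := fun u hu =>
  reg_congr (lt_add_one u) fun q hq _ => h q (hu.trans hq.le)

theorem Gf_future (L2 : ℝ) (g : ℝ≥0∞ → Option E → ℝ) :
    ∀ (t : ℝ) (ω ω' : CPath E), (∀ u, t ≤ u → ω u = ω' u) →
      Gf v L2 g (ENNReal.ofReal t) ω = Gf v L2 g (ENNReal.ofReal t) ω' := by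
  intro t ω ω' h
  set a := (ENNReal.ofReal t).toReal with ha
  have hta : t ≤ a := by
    rcases le_or_gt 0 t with h0 | h0
    · rw [ha, ENNReal.toReal_ofReal h0]
    · rw [ha, ENNReal.ofReal_of_nonpos h0.le]
      simpa using h0.le
  have h0a : 0 ≤ a := ENNReal.toReal_nonneg
  have hreg : ∀ u, a ≤ u → reg ω u = reg ω' u :=
    fun u hu => reg_congr_of_agree (fun u' hu' => h u' ((hta.trans hu).trans hu')) u le_rfl
  have hτ : tauT v a L2 ω = tauT v a L2 ω' := tauT_congr_future v hreg
  rw [Gf, Gf, ← hτ]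
  congr 1
  rw [XTf, XTf]
  by_cases hfin : tauT v a L2 ω = ∞
  · rw [if_pos hfin, if_pos hfin]
  · rw [if_neg hfin, if_neg hfin]
    exact hreg _ (tauT_toReal_ge v h0a hfin)

theorem integrable_of_bdd {α : Type*} [MeasurableSpace α] {μ : MeasureTheory.Measure α}
    [MeasureTheory.IsProbabilityMeasure μ] {f : α → ℝ}
    (hf : MeasureTheory.AEStronglyMeasurable f μ) {C : ℝ} (hC : ∀ x, |f x| ≤ C) :
    MeasureTheory.Integrable f μ := by
  refine MeasureTheory.Integrable.mono' (MeasureTheory.integrable_const C) hf ?_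
  exact MeasureTheory.ae_of_all _ fun x => by rw [Real.norm_eq_abs]; exact hC x

theorem sm_int {v : Option E → ℝ} (M : MarkovFamily E v) (s : ℝ) (hs : 0 ≤ s) (j : Option E)
    (τ : CPath E → ℝ≥0∞) (hτ : IsST s τ) (hτs : ∀ ω, ENNReal.ofReal s ≤ τ ω)
    (G : ℝ≥0∞ → CPath E → ℝ) (hGm : Measurable (Function.uncurry G))
    (hGb : ∃ C, ∀ t ω, |G t ω| ≤ C)
    (hGf : ∀ (t : ℝ) (ω ω' : CPath E), (∀ u, t ≤ u → ω u = ω' u) →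
      G (ENNReal.ofReal t) ω = G (ENNReal.ofReal t) ω') :
    ∫ ω, Set.indicator {ω' : CPath E | τ ω' ≠ ∞} (fun ω' => G (τ ω') ω') ω ∂ M.P s j
      = ∫ ω, Set.indicator {ω' : CPath E | τ ω' ≠ ∞}
          (fun ω' => ∫ ω'', G (τ ω') ω'' ∂ M.P (τ ω').toReal (ω' (τ ω').toReal)) ω
          ∂ M.P s j := by
  haveI := M.prob s j
  have hm : stoppedSigma s τ hτ ≤ (MeasurableSpace.pi : MeasurableSpace (CPath E)) := by
    intro A hA
    have h2 := hA ∞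
    have h3 : A ∩ {ω : CPath E | τ ω ≤ ∞} = A := by
      ext ω; simp
    rw [h3] at h2
    exact fst_le_pi s ∞ _ h2
  haveI : MeasureTheory.SigmaFinite ((M.P s j).trim hm) := by
    haveI : MeasureTheory.IsFiniteMeasure ((M.P s j).trim hm) :=
      MeasureTheory.isFiniteMeasure_trim hm
    infer_instance
  have hsm := M.strongMarkov s j hs τ hτ hτs G hGm hGb hGf
  calc ∫ ω, Set.indicator {ω' : CPath E | τ ω' ≠ ∞} (fun ω' => G (τ ω') ω') ω ∂ M.P s j
      = ∫ ω, ((M.P s j)[fun ω => Set.indicator {ω' : CPath E | τ ω' ≠ ∞}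
          (fun ω' => G (τ ω') ω') ω | stoppedSigma s τ hτ]) ω ∂ M.P s j :=
        (MeasureTheory.integral_condExp hm).symm
    _ = _ := MeasureTheory.integral_congr_ae hsm


theorem ae_rlc {v : Option E → ℝ} (M : MarkovFamily E v) (a : ℝ) (ha : 0 ≤ a)
    (j : Option E) : ∀ᵐ ω ∂ M.P a j, RLC a ω :=
  (M.pathReg a j ha).mono fun ω h => h.1

theorem R1int {v : Option E → ℝ} (M : MarkovFamily E v) {g : ℝ≥0∞ → Option E → ℝ}
    (L2 b : ℝ) (hL2 : 0 ≤ L2) (hb : 0 ≤ b) (j : Option E) :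
    ∫ ω, g (tauT v b L2 ω) (XTf (tauT v b L2 ω) ω) ∂ M.P b j
      = ∫ ω, g (tauP v b L2 ω) (Xat (tauP v b L2 ω) ω) ∂ M.P b j := by
  refine MeasureTheory.integral_congr_ae ?_
  filter_upwards [ae_rlc M b hb j] with ω hω
  rw [tauP_eq_tauT v hω hb hL2]
  congr 1
  rw [XTf, Xat]
  by_cases hfin : tauT v b L2 ω = ∞
  · rw [if_pos hfin, if_pos hfin]
  · rw [if_neg hfin, if_neg hfin]
    exact hω.reg_eq (tauT_toReal_ge v hb hfin)

theorem Gf_tauT0 {g : ℝ≥0∞ → Option E → ℝ} (hgnone : ∀ t, g t none = 0) (L2 b : ℝ)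
    (hb : 0 ≤ b) (hL2 : 0 ≤ L2) (ω : CPath E) :
    Set.indicator {ω' : CPath E | tauT v b 0 ω' ≠ ∞} (fun ω' => Gf v L2 g (tauT v b 0 ω') ω') ω
      = g (tauT v b L2 ω) (XTf (tauT v b L2 ω) ω) := by
  by_cases hfin : tauT v b 0 ω = ∞
  · rw [Set.indicator_of_notMem (by simpa using hfin)]
    have hLfin : tauT v b L2 ω = ∞ := eq_top_iff.mpr (hfin ▸ tauT_mono v hL2)
    rw [hLfin, XTf, if_pos rfl, hgnone]
  · rw [Set.indicator_of_mem (show ω ∈ {ω' : CPath E | tauT v b 0 ω' ≠ ∞} from hfin)]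
    have hconc : tauT v b L2 ω = tauT v ((tauT v b 0 ω).toReal) L2 ω := by
      have hpre : ∀ q : ℚ, b ≤ (q : ℝ) → (q : ℝ) ≤ (tauT v b 0 ω).toReal →
          phiT v b q ω ≤ L2 := by
        intro q hq1 hq2
        rcases lt_or_eq_of_le hq2 with hlt | heq
        · exact le_trans (tauT_pre v hb hfin q hq1 hlt) hL2
        · rw [heq, tauT_phi v hb le_rfl hfin]
          exact hL2
      have h := tauT_concat v (tauT_toReal_ge v hb hfin) (tauT_phi v hb le_rfl hfin) hL2 hpre
      rwa [sub_zero] at h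
    rw [Gf, ← hconc]

theorem Gf_xiMT {g : ℝ≥0∞ → Option E → ℝ} (hgnone : ∀ t, g t none = 0) (s ℓm ℓp : ℝ)
    (h0s : 0 ≤ s) (hℓm : 0 ≤ ℓm) (hℓp : 0 ≤ ℓp) (ω : CPath E) :
    Set.indicator {ω' : CPath E | xiMT v s ℓm ℓp ω' ≠ ∞}
        (fun ω' => Gf v (ℓp + ℓm) g (xiMT v s ℓm ℓp ω') ω') ω
      = if tauMT v s ℓm ω < tauT v s ℓp ω
          then g (tauT v s ℓp ω) (XTf (tauT v s ℓp ω) ω) else 0 := by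
  by_cases hord : tauMT v s ℓm ω < tauT v s ℓp ω
  · have hξ : xiMT v s ℓm ℓp ω = tauMT v s ℓm ω := if_pos hord
    have hfin : tauMT v s ℓm ω ≠ ∞ := (hord.trans_le le_top).ne
    rw [Set.indicator_of_mem
      (show ω ∈ {ω' : CPath E | xiMT v s ℓm ℓp ω' ≠ ∞} from by rw [Set.mem_setOf_eq, hξ]; exact hfin),
      if_pos hord, hξ]
    have hconc : tauT v s ℓp ω = tauT v ((tauMT v s ℓm ω).toReal) (ℓp + ℓm) ω := by
      have hpre : ∀ q : ℚ, s ≤ (q : ℝ) → (q : ℝ) ≤ (tauMT v s ℓm ω).toReal →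
          phiT v s q ω ≤ ℓp := by
        intro q hq1 hq2
        by_contra hgt
        push_neg at hgt
        have h1 : tauT v s ℓp ω ≤ ENNReal.ofReal q := hitT_le hq1 (Set.mem_Ioi.mpr hgt)
        have h2 : ENNReal.ofReal (q : ℝ) ≤ tauMT v s ℓm ω := by
          rw [← ENNReal.ofReal_toReal hfin]
          exact ENNReal.ofReal_le_ofReal hq2
        exact absurd (h1.trans h2) (not_le.mpr hord)
      have h := tauT_concat v (tauMT_toReal_ge v h0s hfin)
        (tauMT_phi v h0s hℓm hfin) (by linarith : -ℓm ≤ ℓp) hpre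
      rwa [sub_neg_eq_add] at h
    rw [Gf, ← hconc]
  · have hξ : xiMT v s ℓm ℓp ω = ∞ := if_neg hord
    rw [Set.indicator_of_notMem
      (show ω ∉ {ω' : CPath E | xiMT v s ℓm ℓp ω' ≠ ∞} from by
        rw [Set.mem_setOf_eq, hξ]; simp), if_neg hord]

theorem lemA {v : Option E → ℝ} (M : MarkovFamily E v) {g : ℝ≥0∞ → Option E → ℝ}
    (hg1 : ∀ j, Measurable fun t => g t j) {C : ℝ} (hgC : ∀ t j, |g t j| ≤ C)
    (hgnone : ∀ t, g t none = 0) (hv0 : v none = 0)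
    (L2 : ℝ) (hL2 : 0 ≤ L2) (b : ℝ) (hb : 0 ≤ b) (j : Option E) :
    ∫ ω, g (tauT v b L2 ω) (XTf (tauT v b L2 ω) ω) ∂ M.P b j
      = ∫ ω, (opP M.P v L2 g) (tauP v b 0 ω) (Xat (tauP v b 0 ω) ω) ∂ M.P b j := by
  haveI := M.prob b j
  have hA1 : ∫ ω, g (tauT v b L2 ω) (XTf (tauT v b L2 ω) ω) ∂ M.P b j
      = ∫ ω, Set.indicator {ω' : CPath E | tauT v b 0 ω' ≠ ∞}
          (fun ω' => Gf v L2 g (tauT v b 0 ω') ω') ω ∂ M.P b j :=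
    MeasureTheory.integral_congr_ae (Filter.Eventually.of_forall fun ω =>
      (Gf_tauT0 v hgnone L2 b hb hL2 ω).symm)
  have hA2 := sm_int M b hb j (tauT v b 0) (isST_tauT v b 0 hb) (fun ω => le_tauT v)
    (Gf v L2 g) (measurable_Gf v L2 hg1) ⟨C, fun t ω => hgC _ _⟩ (Gf_future v L2 g)
  have hA3 : ∫ ω, Set.indicator {ω' : CPath E | tauT v b 0 ω' ≠ ∞}
        (fun ω' => ∫ ω'', Gf v L2 g (tauT v b 0 ω') ω''
          ∂ M.P (tauT v b 0 ω').toReal (ω' (tauT v b 0 ω').toReal)) ω ∂ M.P b j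
      = ∫ ω, (opP M.P v L2 g) (tauP v b 0 ω) (Xat (tauP v b 0 ω) ω) ∂ M.P b j := by
    refine MeasureTheory.integral_congr_ae ?_
    filter_upwards [ae_rlc M b hb j] with ω hω
    by_cases hfin : tauT v b 0 ω = ∞
    · rw [Set.indicator_of_notMem (by simpa using hfin)]
      rw [tauP_eq_tauT v hω hb le_rfl, hfin, Xat, if_pos rfl]
      rfl
    · rw [Set.indicator_of_mem (show ω ∈ {ω' : CPath E | tauT v b 0 ω' ≠ ∞} from hfin)]
      set b2 := (tauT v b 0 ω).toReal with hb2def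
      have hb2 : b ≤ b2 := tauT_toReal_ge v hb hfin
      have hb20 : 0 ≤ b2 := hb.trans hb2
      have hsign : 0 < v (ω b2) := tauT_sign v hω hb le_rfl hfin
      have hXat : Xat (tauP v b 0 ω) ω = ω b2 := by
        rw [tauP_eq_tauT v hω hb le_rfl, Xat, if_neg hfin]
      obtain ⟨e, he⟩ : ∃ e : E, ω b2 = some e := by
        cases hcase : ω b2 with
        | none => rw [hcase, hv0] at hsign; exact absurd hsign (lt_irrefl 0)
        | some e => exact ⟨e, rfl⟩
      rw [hXat, he, tauP_eq_tauT v hω hb le_rfl]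
      have hopP : (opP M.P v L2 g) (tauT v b 0 ω) (some e)
          = ∫ ω'', g (tauP v b2 L2 ω'') (Xat (tauP v b2 L2 ω'') ω'') ∂ M.P b2 (some e) := by
        show (if 0 < v (some e) ∧ tauT v b 0 ω ≠ ∞
            then applyAt M.P (fun a => tauP v a L2) g (tauT v b 0 ω) (some e) else 0) = _
        rw [if_pos ⟨he ▸ hsign, hfin⟩]
        show (if tauT v b 0 ω = ∞ then 0
            else ∫ ω'', g (tauP v b2 L2 ω'') (Xat (tauP v b2 L2 ω'') ω'') ∂ M.P b2 (some e)) = _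
        rw [if_neg hfin]
      rw [hopP]
      have hGeq : ∀ ω'' : CPath E, Gf v L2 g (tauT v b 0 ω) ω''
          = g (tauT v b2 L2 ω'') (XTf (tauT v b2 L2 ω'') ω'') := fun ω'' => rfl
      simp only [hGeq]
      rw [he] at *
      exact R1int M L2 b2 hL2 hb20 (some e)
  rw [hA1, hA2, hA3]


theorem XTf_top (ω : CPath E) : XTf (∞ : ℝ≥0∞) ω = none := if_pos rfl

theorem XTf_ne {T : ℝ≥0∞} (h : T ≠ ∞) (ω : CPath E) : XTf T ω = reg ω T.toReal := if_neg h

theorem Xat_top (ω : CPath E) : Xat (∞ : ℝ≥0∞) ω = none := if_pos rfl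

theorem Xat_ne {T : ℝ≥0∞} (h : T ≠ ∞) (ω : CPath E) : Xat T ω = ω T.toReal := if_neg h

end SM15

end Aux

/-- (Decomposition (4.9).) For every `g⁺ ∈ B_b(X̄₊)` and `(s,i) ∈ ℝ₊ × E`:
`𝔼_{s,i}[g⁺(τ_{ℓ⁺}⁺(s), X_{τ_{ℓ⁺}⁺(s)})]
  = (Ξ⁺_{ℓ⁻,ℓ⁺} g⁺)(s,i) + (Ξ⁻_{ℓ⁻,ℓ⁺} J⁺ 𝒫⁺_{ℓ⁺+ℓ⁻} g⁺)(s,i)`. -/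
theorem tau_plus_expectation_decomposition
    {E : Type*} [Fintype E] (hcard : 1 < Fintype.card E) (v : Option E → ℝ)
    (hv : ∀ e : E, v (some e) ≠ 0) (hv0 : v none = 0)
    (hEp : ∃ e : E, 0 < v (some e)) (hEm : ∃ e : E, v (some e) < 0)
    (M : MarkovFamily E v)
    (g : ℝ≥0∞ → Option E → ℝ) (hg : MemBbP v g)
    (ℓm ℓp : ℝ) (hℓm : 0 ≤ ℓm) (hℓp : 0 ≤ ℓp) (s : ℝ) (hs : 0 ≤ s) (i : E) :
    ∫ ω, g (tauP v s ℓp ω) (Xat (tauP v s ℓp ω) ω) ∂ M.P s (some i)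
      = opXiP M.P v ℓm ℓp g s (some i)
        + opXiM M.P v ℓm ℓp (opJP M.P v (opP M.P v (ℓp + ℓm) g)) s (some i) := by
  classical
  obtain ⟨hg1, ⟨C, hgC⟩, hgnone, hgP⟩ := hg
  haveI := M.prob s (some i)
  have hC0 : 0 ≤ C := (abs_nonneg _).trans (hgC 0 none)
  -- Step 1 : replace the raw first-passage functional by its regularized version
  have step1 : ∫ ω, g (tauP v s ℓp ω) (Xat (tauP v s ℓp ω) ω) ∂ M.P s (some i)
      = ∫ ω, g (SM15.tauT v s ℓp ω) (SM15.XTf (SM15.tauT v s ℓp ω) ω) ∂ M.P s (some i) :=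
    (SM15.R1int M ℓp s hℓp hs (some i)).symm
  -- measurability of the integrands
  have hτpm : Measurable fun ω : CPath E => SM15.tauT v s ℓp ω :=
    SM15.measurable_tauT_omega v s ℓp
  have hτmm : Measurable fun ω : CPath E => SM15.tauMT v s ℓm ω :=
    SM15.measurable_tauMT_omega v s ℓm
  have hFm : Measurable fun ω : CPath E =>
      g (SM15.tauT v s ℓp ω) (SM15.XTf (SM15.tauT v s ℓp ω) ω) :=
    (SM15.measurable_g_uncurry hg1).comp
      (hτpm.prodMk (SM15.measurable_XTf hτpm measurable_id))
  have hF1m : Measurable fun ω : CPath E =>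
      if SM15.tauT v s ℓp ω < SM15.tauMT v s ℓm ω
        then g (SM15.tauT v s ℓp ω) (SM15.XTf (SM15.tauT v s ℓp ω) ω) else 0 :=
    Measurable.ite (measurableSet_lt hτpm hτmm) hFm measurable_const
  have hF2m : Measurable fun ω : CPath E =>
      if SM15.tauMT v s ℓm ω < SM15.tauT v s ℓp ω
        then g (SM15.tauT v s ℓp ω) (SM15.XTf (SM15.tauT v s ℓp ω) ω) else 0 :=
    Measurable.ite (measurableSet_lt hτmm hτpm) hFm measurable_const
  have hint1 : MeasureTheory.Integrable (fun ω : CPath E =>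
      if SM15.tauT v s ℓp ω < SM15.tauMT v s ℓm ω
        then g (SM15.tauT v s ℓp ω) (SM15.XTf (SM15.tauT v s ℓp ω) ω) else 0)
      (M.P s (some i)) :=
    SM15.integrable_of_bdd hF1m.aestronglyMeasurable (fun ω => by
      split_ifs
      · exact hgC _ _
      · simp only [abs_zero]; exact hC0)
  have hint2 : MeasureTheory.Integrable (fun ω : CPath E =>
      if SM15.tauMT v s ℓm ω < SM15.tauT v s ℓp ω
        then g (SM15.tauT v s ℓp ω) (SM15.XTf (SM15.tauT v s ℓp ω) ω) else 0)
      (M.P s (some i)) :=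
    SM15.integrable_of_bdd hF2m.aestronglyMeasurable (fun ω => by
      split_ifs
      · exact hgC _ _
      · simp only [abs_zero]; exact hC0)
  -- Step 2 : split according to the order of the two passage times
  have step2 : ∫ ω, g (SM15.tauT v s ℓp ω) (SM15.XTf (SM15.tauT v s ℓp ω) ω) ∂ M.P s (some i)
      = (∫ ω, (if SM15.tauT v s ℓp ω < SM15.tauMT v s ℓm ω
            then g (SM15.tauT v s ℓp ω) (SM15.XTf (SM15.tauT v s ℓp ω) ω) else 0)
            ∂ M.P s (some i))
        + ∫ ω, (if SM15.tauMT v s ℓm ω < SM15.tauT v s ℓp ω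
            then g (SM15.tauT v s ℓp ω) (SM15.XTf (SM15.tauT v s ℓp ω) ω) else 0)
            ∂ M.P s (some i) := by
    rw [← MeasureTheory.integral_add hint1 hint2]
    refine MeasureTheory.integral_congr_ae ?_
    filter_upwards [SM15.ae_rlc M s hs (some i)] with ω hω
    rcases lt_trichotomy (SM15.tauT v s ℓp ω) (SM15.tauMT v s ℓm ω) with hlt | heq | hgt
    · simp only [if_pos hlt, if_neg (asymm hlt), add_zero]
    · have hinf := SM15.tauT_ne_tauMT v hω hs hℓp hℓm heq
      rw [if_neg (by rw [heq]; exact lt_irrefl _), if_neg (by rw [← heq]; exact lt_irrefl _),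
        add_zero, hinf, SM15.XTf_top, hgnone]
    · simp only [if_neg (asymm hgt), if_pos hgt, zero_add]
  -- Step 3 : the first term is `opXiP`
  have step3 : ∫ ω, (if SM15.tauT v s ℓp ω < SM15.tauMT v s ℓm ω
        then g (SM15.tauT v s ℓp ω) (SM15.XTf (SM15.tauT v s ℓp ω) ω) else 0)
        ∂ M.P s (some i) = opXiP M.P v ℓm ℓp g s (some i) := by
    rw [opXiP]
    refine MeasureTheory.integral_congr_ae ?_
    filter_upwards [SM15.ae_rlc M s hs (some i)] with ω hω
    have hxiP : xiP v ℓm ℓp s ω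
        = if SM15.tauT v s ℓp ω < SM15.tauMT v s ℓm ω then SM15.tauT v s ℓp ω else ∞ := by
      rw [xiP, SM15.tauP_eq_tauT v hω hs hℓp, SM15.tauM_eq_tauMT v hω hs hℓm]
    by_cases hord : SM15.tauT v s ℓp ω < SM15.tauMT v s ℓm ω
    · have hfin : SM15.tauT v s ℓp ω ≠ ∞ := (hord.trans_le le_top).ne
      rw [if_pos hord, hxiP, if_pos hord]
      congr 1
      rw [SM15.XTf_ne hfin, SM15.Xat_ne hfin]
      exact hω.reg_eq (SM15.tauT_toReal_ge v hs hfin)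
    · rw [if_neg hord, hxiP, if_neg hord, SM15.Xat_top, hgnone]
  -- Step 4 : the second term collapses to the pre-`ξ⁻` functional
  have step4 : ∫ ω, (if SM15.tauMT v s ℓm ω < SM15.tauT v s ℓp ω
        then g (SM15.tauT v s ℓp ω) (SM15.XTf (SM15.tauT v s ℓp ω) ω) else 0)
        ∂ M.P s (some i)
      = ∫ ω, Set.indicator {ω' : CPath E | SM15.xiMT v s ℓm ℓp ω' ≠ ∞}
          (fun ω' => SM15.Gf v (ℓp + ℓm) g (SM15.xiMT v s ℓm ℓp ω') ω') ω ∂ M.P s (some i) :=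
    MeasureTheory.integral_congr_ae (Filter.Eventually.of_forall fun ω =>
      (SM15.Gf_xiMT v hgnone s ℓm ℓp hs hℓm hℓp ω).symm)
  -- Step 5 : strong Markov property at `ξ⁻`
  have step5 := SM15.sm_int M s hs (some i) (SM15.xiMT v s ℓm ℓp)
    (SM15.isST_xiMT v s ℓm ℓp hs) (SM15.xiMT_ge v s ℓm ℓp) (SM15.Gf v (ℓp + ℓm) g)
    (SM15.measurable_Gf v (ℓp + ℓm) hg1) ⟨C, fun t ω => hgC _ _⟩
    (SM15.Gf_future v (ℓp + ℓm) g)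
  -- Step 6 : identify the resulting expression with `opXiM (opJP (opP g))`
  have step6 : ∫ ω, Set.indicator {ω' : CPath E | SM15.xiMT v s ℓm ℓp ω' ≠ ∞}
        (fun ω' => ∫ ω'', SM15.Gf v (ℓp + ℓm) g (SM15.xiMT v s ℓm ℓp ω') ω''
          ∂ M.P (SM15.xiMT v s ℓm ℓp ω').toReal (ω' (SM15.xiMT v s ℓm ℓp ω').toReal)) ω
        ∂ M.P s (some i)
      = opXiM M.P v ℓm ℓp (opJP M.P v (opP M.P v (ℓp + ℓm) g)) s (some i) := by
    rw [opXiM]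
    refine MeasureTheory.integral_congr_ae ?_
    filter_upwards [SM15.ae_rlc M s hs (some i)] with ω hω
    have hxiM : xiM v ℓm ℓp s ω = SM15.xiMT v s ℓm ℓp ω := by
      rw [xiM, SM15.xiMT, SM15.tauP_eq_tauT v hω hs hℓp, SM15.tauM_eq_tauMT v hω hs hℓm]
    by_cases hne : SM15.xiMT v s ℓm ℓp ω = ∞
    · rw [Set.indicator_of_notMem (show ω ∉ {ω' : CPath E | SM15.xiMT v s ℓm ℓp ω' ≠ ∞}
        from fun h => h hne), hxiM, hne, SM15.Xat_top]
      rfl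
    · have hord : SM15.tauMT v s ℓm ω < SM15.tauT v s ℓp ω := by
        by_contra hc
        exact hne (if_neg hc)
      have hξeq : SM15.xiMT v s ℓm ℓp ω = SM15.tauMT v s ℓm ω := if_pos hord
      have hfin : SM15.tauMT v s ℓm ω ≠ ∞ := by rwa [hξeq] at hne
      rw [Set.indicator_of_mem (show ω ∈ {ω' : CPath E | SM15.xiMT v s ℓm ℓp ω' ≠ ∞} from hne),
        hxiM, hξeq]
      have hbs : s ≤ (SM15.tauMT v s ℓm ω).toReal := SM15.tauMT_toReal_ge v hs hfin
      have hb0 : (0 : ℝ) ≤ (SM15.tauMT v s ℓm ω).toReal := hs.trans hbs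
      have hsign : v (ω ((SM15.tauMT v s ℓm ω).toReal)) < 0 :=
        SM15.tauMT_sign v hω hs hℓm hfin
      obtain ⟨e, he⟩ : ∃ e : E, ω ((SM15.tauMT v s ℓm ω).toReal) = some e := by
        cases hcase : ω ((SM15.tauMT v s ℓm ω).toReal) with
        | none => rw [hcase, hv0] at hsign; exact absurd hsign (lt_irrefl 0)
        | some e => exact ⟨e, rfl⟩
      rw [SM15.Xat_ne hfin, he]
      have hopJP : opJP M.P v (opP M.P v (ℓp + ℓm) g) (SM15.tauMT v s ℓm ω) (some e)
          = ∫ ω'', (opP M.P v (ℓp + ℓm) g)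
              (tauP v ((SM15.tauMT v s ℓm ω).toReal) 0 ω'')
              (Xat (tauP v ((SM15.tauMT v s ℓm ω).toReal) 0 ω'') ω'')
              ∂ M.P ((SM15.tauMT v s ℓm ω).toReal) (some e) := by
        show (if v (some e) < 0 ∧ SM15.tauMT v s ℓm ω ≠ ∞
            then applyAt M.P (fun a => tauP v a 0) (opP M.P v (ℓp + ℓm) g)
              (SM15.tauMT v s ℓm ω) (some e) else 0) = _
        rw [if_pos ⟨he ▸ hsign, hfin⟩]
        show (if SM15.tauMT v s ℓm ω = ∞ then 0 else _) = _
        rw [if_neg hfin]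
      rw [hopJP]
      have hGeq : ∀ ω'' : CPath E, SM15.Gf v (ℓp + ℓm) g (SM15.tauMT v s ℓm ω) ω''
          = g (SM15.tauT v ((SM15.tauMT v s ℓm ω).toReal) (ℓp + ℓm) ω'')
              (SM15.XTf (SM15.tauT v ((SM15.tauMT v s ℓm ω).toReal) (ℓp + ℓm) ω'') ω'') :=
        fun _ => rfl
      simp only [hGeq]
      exact SM15.lemA M hg1 hgC hgnone hv0 (ℓp + ℓm) (add_nonneg hℓp hℓm)
        ((SM15.tauMT v s ℓm ω).toReal) hb0 (some e)
  rw [step1, step2, step3, step4, step5, step6]
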